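/- arXiv:math/0403016 — 6 statements merged into one kernel-verified Lean document; each statement's English description precedes it below -/
import Mathlib

section
/- Suppose (X_t)_{t≥0} satisfies conditions (cov) and (LR). Then for all 0 ≤ s < t < u, almost surely E(X_t | F_{≤s} ∨ F_{≥u}) = ((u−t)/(u−s)) X_s + ((t−s)/(u−s)) X_u (i.e. the coefficients in (LR) are a(s,t,u) = (u−t)/(u−s) and b(s,t,u) = (t−s)/(u−s)); moreover E(X_t | F_{≤s}) = X_s almost surely for all 0 ≤ s ≤ t, and E(X_t | F_{≥u}) = (t/u) X_u almost surely for all 0 < t < u. -/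
open MeasureTheory

namespace ProofAux

variable {Ω : Type*} {m m0 : MeasurableSpace Ω} {μ : Measure Ω}

lemma integrable_mul₂ {f g : Ω → ℝ} (hf : MemLp f 2 μ) (hg : MemLp g 2 μ) :
    Integrable (fun ω => f ω * g ω) μ := by
  have h : MemLp (f • g) 1 μ := hg.smul hf
  rw [memLp_one_iff_integrable] at h
  exact h.congr (by filter_upwards with ω; simp [smul_eq_mul])

lemma memℒp_two_condexp [IsFiniteMeasure μ] (hm : m ≤ m0)
    {f : Ω → ℝ} (hf : MemLp f 2 μ) : MemLp (μ[f|m]) 2 μ := by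
  haveI : SigmaFinite (μ.trim hm) := by
    have := isFiniteMeasure_trim (μ := μ) hm; infer_instance
  have hg2 : MemLp ((condExpL2 ℝ ℝ hm (hf.toLp f) : Lp ℝ 2 μ) : Ω → ℝ) 2 μ := Lp.memLp _
  refine hg2.ae_eq ?_
  refine ae_eq_condExp_of_forall_setIntegral_eq hm (hf.integrable one_le_two)
      (fun s _ _ => (hg2.integrable one_le_two).integrableOn) (fun s hs hμs => ?_)
      (aestronglyMeasurable_condExpL2 hm _)
  rw [integral_condExpL2_eq hm (hf.toLp f) hs hμs.ne]
  exact setIntegral_congr_ae (hm s hs) ((hf.coeFn_toLp).mono fun ω hω _ => hω)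

lemma integral_condexp_mul [IsFiniteMeasure μ] (hm : m ≤ m0)
    {f g : Ω → ℝ} (hf : MemLp f 2 μ) (hg : MemLp g 2 μ) (hgm : StronglyMeasurable[m] g) :
    ∫ ω, (μ[f|m]) ω * g ω ∂μ = ∫ ω, f ω * g ω ∂μ := by
  haveI : SigmaFinite (μ.trim hm) := by
    have := isFiniteMeasure_trim (μ := μ) hm; infer_instance
  have hmul : μ[g * f|m] =ᵐ[μ] g * μ[f|m] :=
    condExp_mul_of_stronglyMeasurable_left hgm
      ((integrable_mul₂ hg hf).congr (by filter_upwards with ω; rfl))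
      (hf.integrable one_le_two)
  calc ∫ ω, (μ[f|m]) ω * g ω ∂μ = ∫ ω, (g * μ[f|m]) ω ∂μ := by
        congr 1; funext ω; simp [mul_comm]
    _ = ∫ ω, (μ[g * f|m]) ω ∂μ := (integral_congr_ae hmul).symm
    _ = ∫ ω, (g * f) ω ∂μ := integral_condExp hm
    _ = ∫ ω, f ω * g ω ∂μ := by congr 1; funext ω; simp [mul_comm]

end ProofAux

open ProofAux

noncomputable section

/-- The σ-field generated by the process `X` on the time interval `[0, s]`. -/
def sigmaLE {Ω : Type*} [MeasurableSpace Ω] {E : Type*} [MeasurableSpace E]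
    (X : ℝ → Ω → E) (s : ℝ) : MeasurableSpace Ω :=
  ⨆ r ∈ Set.Icc (0:ℝ) s, MeasurableSpace.comap (X r) inferInstance

/-- The σ-field generated by the process `X` on the time interval `[u, ∞)`. -/
def sigmaGE {Ω : Type*} [MeasurableSpace Ω] {E : Type*} [MeasurableSpace E]
    (X : ℝ → Ω → E) (u : ℝ) : MeasurableSpace Ω :=
  ⨆ r ∈ Set.Ici u, MeasurableSpace.comap (X r) inferInstance

theorem stmt0 {Ω : Type*} [MeasurableSpace Ω] (μ : Measure Ω) [IsProbabilityMeasure μ]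
    (X : ℝ → Ω → ℝ) (hmeas : ∀ t, Measurable (X t))
    (hL2 : ∀ t, 0 ≤ t → MemLp (X t) 2 μ)
    (hX0 : ∀ ω, X 0 ω = 0)
    (hmean : ∀ t : ℝ, 0 ≤ t → ∫ ω, X t ω ∂μ = 0)
    (hcov : ∀ s t : ℝ, 0 ≤ s → 0 ≤ t → ∫ ω, X t ω * X s ω ∂μ = min t s)
    (a b : ℝ → ℝ → ℝ → ℝ)
    (hLR : ∀ s t u : ℝ, 0 ≤ s → s < t → t < u →
      μ[X t | sigmaLE X s ⊔ sigmaGE X u] =ᵐ[μ]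
        fun ω => a s t u * X s ω + b s t u * X u ω) :
    (∀ s t u : ℝ, 0 ≤ s → s < t → t < u →
      μ[X t | sigmaLE X s ⊔ sigmaGE X u] =ᵐ[μ]
        fun ω => (u - t)/(u - s) * X s ω + (t - s)/(u - s) * X u ω) ∧
    (∀ s t : ℝ, 0 ≤ s → s ≤ t → μ[X t | sigmaLE X s] =ᵐ[μ] X s) ∧
    (∀ t u : ℝ, 0 < t → t < u → μ[X t | sigmaGE X u] =ᵐ[μ] fun ω => t/u * X u ω) := by
  have hLE_le : ∀ s : ℝ, sigmaLE X s ≤ ‹MeasurableSpace Ω› :=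
    fun s => iSup₂_le fun r _ => (hmeas r).comap_le
  have hGE_le : ∀ u : ℝ, sigmaGE X u ≤ ‹MeasurableSpace Ω› :=
    fun u => iSup₂_le fun r _ => (hmeas r).comap_le
  have hXsLE : ∀ s : ℝ, 0 ≤ s → StronglyMeasurable[sigmaLE X s] (X s) := by
    intro s hs
    have hle : MeasurableSpace.comap (X s) inferInstance ≤ sigmaLE X s :=
      le_biSup (fun r => MeasurableSpace.comap (X r) inferInstance)
        (Set.mem_Icc.mpr ⟨hs, le_rfl⟩)
    exact (measurable_iff_comap_le.mpr hle).stronglyMeasurable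
  have hXuGE : ∀ u : ℝ, StronglyMeasurable[sigmaGE X u] (X u) := by
    intro u
    have hle : MeasurableSpace.comap (X u) inferInstance ≤ sigmaGE X u :=
      le_biSup (fun r => MeasurableSpace.comap (X r) inferInstance)
        (Set.mem_Ici.mpr le_rfl)
    exact (measurable_iff_comap_le.mpr hle).stronglyMeasurable
  -- Part 1
  have part1 : ∀ s t u : ℝ, 0 ≤ s → s < t → t < u →
      μ[X t | sigmaLE X s ⊔ sigmaGE X u] =ᵐ[μ]
        fun ω => (u - t)/(u - s) * X s ω + (t - s)/(u - s) * X u ω := by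
    intro s t u hs hst htu
    have ht0 : (0:ℝ) ≤ t := hs.trans hst.le
    have hu0 : (0:ℝ) ≤ u := ht0.trans htu.le
    have hsu : s < u := hst.trans htu
    have hus : u - s ≠ 0 := sub_ne_zero.mpr hsu.ne'
    have hm : sigmaLE X s ⊔ sigmaGE X u ≤ ‹MeasurableSpace Ω› :=
      sup_le (hLE_le s) (hGE_le u)
    have hXs_m : StronglyMeasurable[sigmaLE X s ⊔ sigmaGE X u] (X s) :=
      (hXsLE s hs).mono le_sup_left
    have hXu_m : StronglyMeasurable[sigmaLE X s ⊔ sigmaGE X u] (X u) :=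
      (hXuGE u).mono le_sup_right
    have h := hLR s t u hs hst htu
    have eq1 : a s t u * s + b s t u * s = s := by
      have lhs1 : ∫ ω, (μ[X t|sigmaLE X s ⊔ sigmaGE X u]) ω * X s ω ∂μ = s := by
        rw [integral_condexp_mul hm (hL2 t ht0) (hL2 s hs) hXs_m, hcov s t hs ht0,
          min_eq_right hst.le]
      have lhs2 : ∫ ω, (μ[X t|sigmaLE X s ⊔ sigmaGE X u]) ω * X s ω ∂μ
          = a s t u * s + b s t u * s := by
        rw [integral_congr_ae (show (fun ω => (μ[X t|sigmaLE X s ⊔ sigmaGE X u]) ω * X s ω)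
            =ᵐ[μ] fun ω => a s t u * (X s ω * X s ω) + b s t u * (X u ω * X s ω) by
          filter_upwards [h] with ω hω
          have hω' : (μ[X t|sigmaLE X s ⊔ sigmaGE X u]) ω
              = a s t u * X s ω + b s t u * X u ω := hω
          show (μ[X t|sigmaLE X s ⊔ sigmaGE X u]) ω * X s ω = _
          rw [hω']; ring)]
        rw [integral_add ((integrable_mul₂ (hL2 s hs) (hL2 s hs)).const_mul _)
          ((integrable_mul₂ (hL2 u hu0) (hL2 s hs)).const_mul _),
          integral_const_mul, integral_const_mul, hcov s s hs hs, hcov s u hs hu0,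
          min_self, min_eq_right hsu.le]
      rw [← lhs2, lhs1]
    have eq2 : a s t u * s + b s t u * u = t := by
      have lhs1 : ∫ ω, (μ[X t|sigmaLE X s ⊔ sigmaGE X u]) ω * X u ω ∂μ = t := by
        rw [integral_condexp_mul hm (hL2 t ht0) (hL2 u hu0) hXu_m, hcov u t hu0 ht0,
          min_eq_left htu.le]
      have lhs2 : ∫ ω, (μ[X t|sigmaLE X s ⊔ sigmaGE X u]) ω * X u ω ∂μ
          = a s t u * s + b s t u * u := by
        rw [integral_congr_ae (show (fun ω => (μ[X t|sigmaLE X s ⊔ sigmaGE X u]) ω * X u ω)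
            =ᵐ[μ] fun ω => a s t u * (X s ω * X u ω) + b s t u * (X u ω * X u ω) by
          filter_upwards [h] with ω hω
          have hω' : (μ[X t|sigmaLE X s ⊔ sigmaGE X u]) ω
              = a s t u * X s ω + b s t u * X u ω := hω
          show (μ[X t|sigmaLE X s ⊔ sigmaGE X u]) ω * X u ω = _
          rw [hω']; ring)]
        rw [integral_add ((integrable_mul₂ (hL2 s hs) (hL2 u hu0)).const_mul _)
          ((integrable_mul₂ (hL2 u hu0) (hL2 u hu0)).const_mul _),
          integral_const_mul, integral_const_mul, hcov u s hu0 hs, hcov u u hu0 hu0,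
          min_self, min_eq_left hsu.le]
      rw [← lhs2, lhs1]
    have hB : b s t u = (t - s)/(u - s) := by
      field_simp
      linear_combination eq2 - eq1
    refine h.trans (Filter.Eventually.of_forall fun ω => ?_)
    show a s t u * X s ω + b s t u * X u ω
      = (u - t)/(u - s) * X s ω + (t - s)/(u - s) * X u ω
    rcases eq_or_lt_of_le hs with hs0 | hs0
    · rw [← hs0] at hB ⊢
      rw [hX0 ω, hB]
      ring
    · have hA : a s t u = (u - t)/(u - s) := by
        have h2 : a s t u * s = (u - t) / (u - s) * s := by
          rw [hB] at eq1
          field_simp at eq1 ⊢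
          linarith
        exact mul_right_cancel₀ hs0.ne' h2
      rw [hA, hB]
  refine ⟨part1, ?_, ?_⟩
  -- Part 2
  · intro s t hs hst
    rcases hst.eq_or_lt with rfl | hlt
    · rw [condExp_of_stronglyMeasurable (hLE_le s) (hXsLE s hs)
        ((hL2 s hs).integrable one_le_two)]
    · -- s < t
      have ht0 : (0:ℝ) ≤ t := hs.trans hst
      have hm' : sigmaLE X s ≤ ‹MeasurableSpace Ω› := hLE_le s
      haveI : SigmaFinite (μ.trim hm') := by
        have := isFiniteMeasure_trim (μ := μ) hm'; infer_instance
      have hPvXs : ∀ v : ℝ, s < v → ∫ ω, (μ[X v|sigmaLE X s]) ω * X s ω ∂μ = s := by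
        intro v hsv
        have hv0 : (0:ℝ) ≤ v := hs.trans hsv.le
        rw [integral_condexp_mul hm' (hL2 v hv0) (hL2 s hs) (hXsLE s hs), hcov s v hs hv0,
          min_eq_right hsv.le]
      have hXs2 : ∫ ω, (X s ω)^2 ∂μ = s := by
        simp_rw [sq]; exact (hcov s s hs hs).trans (min_self s)
      have hQle : ∀ v : ℝ, 0 ≤ v → ∫ ω, ((μ[X v|sigmaLE X s]) ω)^2 ∂μ ≤ v := by
        intro v hv0
        have hPv : MemLp (μ[X v|sigmaLE X s]) 2 μ := memℒp_two_condexp hm' (hL2 v hv0)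
        have e : ∫ ω, ((μ[X v|sigmaLE X s]) ω)^2 ∂μ
            = ∫ ω, X v ω * (μ[X v|sigmaLE X s]) ω ∂μ := by
          rw [← integral_condexp_mul hm' (hL2 v hv0) hPv stronglyMeasurable_condExp]
          congr 1; funext ω; rw [sq]
        have hXv2 : ∫ ω, (X v ω)^2 ∂μ = v := by
          simp_rw [sq]; exact (hcov v v hv0 hv0).trans (min_self v)
        have bound : ∫ ω, X v ω * (μ[X v|sigmaLE X s]) ω ∂μ
            ≤ ∫ ω, ((X v ω)^2 + ((μ[X v|sigmaLE X s]) ω)^2)/2 ∂μ :=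
          integral_mono (integrable_mul₂ (hL2 v hv0) hPv)
            (((hL2 v hv0).integrable_sq.add hPv.integrable_sq).div_const 2)
            (fun ω => by nlinarith [sq_nonneg (X v ω - (μ[X v|sigmaLE X s]) ω)])
        rw [integral_div, integral_add (hL2 v hv0).integrable_sq hPv.integrable_sq, hXv2]
          at bound
        linarith [e, bound]
      have hD : ∀ v : ℝ, s < v → ∫ ω, ((μ[X v|sigmaLE X s]) ω - X s ω)^2 ∂μ
          = (∫ ω, ((μ[X v|sigmaLE X s]) ω)^2 ∂μ) - s := by
        intro v hsv
        have hv0 : (0:ℝ) ≤ v := hs.trans hsv.le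
        have hPv : MemLp (μ[X v|sigmaLE X s]) 2 μ := memℒp_two_condexp hm' (hL2 v hv0)
        have expand : (fun ω => ((μ[X v|sigmaLE X s]) ω - X s ω)^2)
            = fun ω => (((μ[X v|sigmaLE X s]) ω)^2
              - 2*((μ[X v|sigmaLE X s]) ω * X s ω)) + (X s ω)^2 := by funext ω; ring
        have i1 : Integrable (fun ω => (μ[X v|sigmaLE X s]) ω ^ 2
            - 2*((μ[X v|sigmaLE X s]) ω * X s ω)) μ :=
          hPv.integrable_sq.sub ((integrable_mul₂ hPv (hL2 s hs)).const_mul 2)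
        have i2 : Integrable (fun ω => (X s ω)^2) μ := (hL2 s hs).integrable_sq
        rw [expand, integral_add i1 i2,
          integral_sub hPv.integrable_sq ((integrable_mul₂ hPv (hL2 s hs)).const_mul 2),
          integral_const_mul, hPvXs v hsv, hXs2]
        ring
      have Dt_le : ∀ u : ℝ, t < u →
          ∫ ω, ((μ[X t|sigmaLE X s]) ω - X s ω)^2 ∂μ ≤ (t-s)^2/(u-s) := by
        intro u htu
        have hu0 : (0:ℝ) ≤ u := ht0.trans htu.le
        have hsu : s < u := hlt.trans htu
        have hus : (0:ℝ) < u - s := sub_pos.mpr hsu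
        have hus' : u - s ≠ 0 := hus.ne'
        have hM : sigmaLE X s ⊔ sigmaGE X u ≤ ‹MeasurableSpace Ω› :=
          sup_le (hLE_le s) (hGE_le u)
        haveI : SigmaFinite (μ.trim hM) := by
          have := isFiniteMeasure_trim (μ := μ) hM; infer_instance
        have step1 : μ[X t|sigmaLE X s]
            =ᵐ[μ] μ[μ[X t|sigmaLE X s ⊔ sigmaGE X u]|sigmaLE X s] :=
          (condExp_condExp_of_le le_sup_left hM).symm
        have step2 : μ[μ[X t|sigmaLE X s ⊔ sigmaGE X u]|sigmaLE X s]
            =ᵐ[μ] μ[(fun ω => (u-t)/(u-s) * X s ω + (t-s)/(u-s) * X u ω)|sigmaLE X s] :=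
          condExp_congr_ae (part1 s t u hs hlt htu)
        have hadd : μ[(fun ω => (u-t)/(u-s) * X s ω + (t-s)/(u-s) * X u ω)|sigmaLE X s]
            =ᵐ[μ] μ[(fun ω => (u-t)/(u-s) * X s ω)|sigmaLE X s]
              + μ[(fun ω => (t-s)/(u-s) * X u ω)|sigmaLE X s] :=
          condExp_add (((hL2 s hs).integrable one_le_two).const_mul _)
            (((hL2 u hu0).integrable one_le_two).const_mul _) _
        have hfirst : μ[(fun ω => (u-t)/(u-s) * X s ω)|sigmaLE X s]
            = fun ω => (u-t)/(u-s) * X s ω :=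
          condExp_of_stronglyMeasurable hm' ((hXsLE s hs).const_mul _)
            (((hL2 s hs).integrable one_le_two).const_mul _)
        have hsecond : μ[(fun ω => (t-s)/(u-s) * X u ω)|sigmaLE X s]
            =ᵐ[μ] fun ω => (t-s)/(u-s) * (μ[X u|sigmaLE X s]) ω :=
          condExp_smul ((t-s)/(u-s)) (X u) (sigmaLE X s)
        have chain : μ[X t|sigmaLE X s] =ᵐ[μ]
            fun ω => (u-t)/(u-s) * X s ω + (t-s)/(u-s) * (μ[X u|sigmaLE X s]) ω := by
          refine step1.trans (step2.trans (hadd.trans ?_))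
          rw [hfirst]
          filter_upwards [hsecond] with ω hω
          show (u-t)/(u-s) * X s ω
              + (μ[(fun ω => (t-s)/(u-s) * X u ω)|sigmaLE X s]) ω = _
          rw [hω]
        have diff : (fun ω => (μ[X t|sigmaLE X s]) ω - X s ω) =ᵐ[μ]
            fun ω => ((t-s)/(u-s)) * ((μ[X u|sigmaLE X s]) ω - X s ω) := by
          filter_upwards [chain] with ω hω
          have hω' : (μ[X t|sigmaLE X s]) ω
              = (u-t)/(u-s) * X s ω + (t-s)/(u-s) * (μ[X u|sigmaLE X s]) ω := hω
          show (μ[X t|sigmaLE X s]) ω - X s ω = _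
          rw [hω']
          field_simp
          ring
        calc ∫ ω, ((μ[X t|sigmaLE X s]) ω - X s ω)^2 ∂μ
            = ∫ ω, ((t-s)/(u-s))^2 * ((μ[X u|sigmaLE X s]) ω - X s ω)^2 ∂μ := by
              refine integral_congr_ae ?_
              filter_upwards [diff] with ω hω
              have hω' : (μ[X t|sigmaLE X s]) ω - X s ω
                  = ((t-s)/(u-s)) * ((μ[X u|sigmaLE X s]) ω - X s ω) := hω
              show ((μ[X t|sigmaLE X s]) ω - X s ω)^2 = _
              rw [hω']; ring
          _ = ((t-s)/(u-s))^2 * ∫ ω, ((μ[X u|sigmaLE X s]) ω - X s ω)^2 ∂μ :=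
              integral_const_mul _ _
          _ ≤ ((t-s)/(u-s))^2 * (u - s) := by
              refine mul_le_mul_of_nonneg_left ?_ (sq_nonneg _)
              rw [hD u hsu]
              linarith [hQle u hu0]
          _ = (t-s)^2/(u-s) := by field_simp
      have Dt_nonneg : 0 ≤ ∫ ω, ((μ[X t|sigmaLE X s]) ω - X s ω)^2 ∂μ :=
        integral_nonneg fun ω => sq_nonneg _
      have Dt_zero : ∫ ω, ((μ[X t|sigmaLE X s]) ω - X s ω)^2 ∂μ = 0 := by
        refine le_antisymm ?_ Dt_nonneg
        refine le_of_forall_pos_le_add fun ε hε => ?_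
        have htu : t < max (t+1) (s + (t-s)^2/ε) :=
          lt_of_lt_of_le (lt_add_one t) (le_max_left _ _)
        refine (Dt_le _ htu).trans ?_
        have h1 : (t-s)^2/ε ≤ max (t+1) (s + (t-s)^2/ε) - s := by
          have := le_max_right (t+1) (s + (t-s)^2/ε); linarith
        have h2 : (0:ℝ) < max (t+1) (s + (t-s)^2/ε) - s := by
          have : s < max (t+1) (s + (t-s)^2/ε) := hlt.trans htu; linarith
        rw [div_le_iff₀ h2]
        have h3 : (t-s)^2 ≤ (max (t+1) (s + (t-s)^2/ε) - s) * ε := (div_le_iff₀ hε).mp h1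
        have h4 : ε * (max (t+1) (s + (t-s)^2/ε) - s)
            = (max (t+1) (s + (t-s)^2/ε) - s) * ε := mul_comm _ _
        linarith
      have hPt : MemLp (μ[X t|sigmaLE X s]) 2 μ := memℒp_two_condexp hm' (hL2 t ht0)
      have hint : Integrable (fun ω => ((μ[X t|sigmaLE X s]) ω - X s ω)^2) μ :=
        (hPt.sub (hL2 s hs)).integrable_sq
      have sq_ae : (fun ω => ((μ[X t|sigmaLE X s]) ω - X s ω)^2) =ᵐ[μ] 0 :=
        (integral_eq_zero_iff_of_nonneg (fun ω => sq_nonneg _) hint).mp Dt_zero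
      filter_upwards [sq_ae] with ω hω
      have h0 : ((μ[X t|sigmaLE X s]) ω - X s ω)^2 = 0 := hω
      have := sq_eq_zero_iff.mp h0
      exact sub_eq_zero.mp this
  -- Part 3
  · intro t u ht htu
    have ht0 : (0:ℝ) ≤ t := ht.le
    have hu0 : (0:ℝ) ≤ u := ht0.trans htu.le
    have hM : sigmaLE X 0 ⊔ sigmaGE X u ≤ ‹MeasurableSpace Ω› :=
      sup_le (hLE_le 0) (hGE_le u)
    haveI : SigmaFinite (μ.trim hM) := by
      have := isFiniteMeasure_trim (μ := μ) hM; infer_instance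
    have h1 : μ[X t|sigmaGE X u] =ᵐ[μ] μ[μ[X t|sigmaLE X 0 ⊔ sigmaGE X u]|sigmaGE X u] :=
      (condExp_condExp_of_le le_sup_right hM).symm
    have h2 : μ[μ[X t|sigmaLE X 0 ⊔ sigmaGE X u]|sigmaGE X u]
        =ᵐ[μ] μ[(fun ω => t/u * X u ω)|sigmaGE X u] := by
      refine condExp_congr_ae ((part1 0 t u le_rfl ht htu).trans
        (Filter.Eventually.of_forall fun ω => ?_))
      show (u - t)/(u - 0) * X 0 ω + (t - 0)/(u - 0) * X u ω = t/u * X u ω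
      rw [hX0 ω]
      have : u ≠ 0 := (ht.trans htu).ne'
      field_simp
      ring
    have h3 : μ[(fun ω => t/u * X u ω)|sigmaGE X u] = fun ω => t/u * X u ω := by
      refine condExp_of_stronglyMeasurable (hGE_le u) ?_ ?_
      · exact (hXuGE u).const_mul _
      · exact ((hL2 u hu0).integrable one_le_two).const_mul _
    exact h1.trans (h2.trans (by rw [h3]))
end
end

section
/- (Lemma 2.2) Let (X_t)_{t≥0} satisfy (cov) and (LR), suppose that 1, X_t, X_t² are linearly independent for all t > 0, and suppose condition (QV) holds with D(s,t,u) ≠ 0 for all 0 ≤ s < t < u. Then for every 0 ≤ s < t < u one has b(s,t,u) − C(s,t,u) ≠ 0 (where b is the coefficient from (LR) and C from (QV)), for every 0 ≤ t < u the conditional expectation E(X_u² | F_{≤t}) is almost surely equal to a quadratic polynomial in X_t with deterministic coefficients, and moreover for all 0 ≤ s < t < u, almost surely E(X_u² − u | F_{≤s}) = (1 + (A+B+C−1)/(b−C))·(X_s² − s) + ((α+β)/(b−C))·X_s, where all coefficients are evaluated at (s,t,u). -/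
open MeasureTheory

noncomputable section

/-- The conditional variance `Var(f | m) = E(f² | m) − (E(f | m))²`. -/
def condVar {Ω : Type*} [MeasurableSpace Ω] (μ : Measure Ω) (m : MeasurableSpace Ω)
    (f : Ω → ℝ) : Ω → ℝ :=
  fun ω => (μ[fun ω' => (f ω') ^ 2 | m]) ω - ((μ[f | m]) ω) ^ 2

/-- `1, f, f²` are linearly independent: no nontrivial real linear combination of them
vanishes almost surely. -/
def LinIndep123 {Ω : Type*} [MeasurableSpace Ω] (μ : Measure Ω) (f : Ω → ℝ) : Prop :=
  ∀ c₀ c₁ c₂ : ℝ, (fun ω => c₀ + c₁ * f ω + c₂ * (f ω) ^ 2) =ᵐ[μ] (fun _ => 0) →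
    c₀ = 0 ∧ c₁ = 0 ∧ c₂ = 0

section Helpers

set_option linter.unusedSectionVars false

variable {Ω : Type*} {m m0 : MeasurableSpace Ω} {μ : Measure Ω} [IsProbabilityMeasure μ]

lemma aux_int_mul {f g : Ω → ℝ} (hf : MemLp f 2 μ) (hg : MemLp g 2 μ) :
    Integrable (fun ω => f ω * g ω) μ := by
  have h1 := hf.integrable_sq
  have h2 := hg.integrable_sq
  refine Integrable.mono' ((h1.add h2).div_const 2)
    (hf.aestronglyMeasurable.mul hg.aestronglyMeasurable) ?_
  filter_upwards with ω
  simp only [Pi.add_apply]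
  rw [Real.norm_eq_abs, abs_mul]
  nlinarith [sq_nonneg (|f ω| - |g ω|), sq_abs (f ω), sq_abs (g ω), abs_nonneg (f ω),
      abs_nonneg (g ω)]

lemma aux_memL2_condexp (hm : m ≤ m0) {f : Ω → ℝ}
    (hf : MemLp f 2 μ) : MemLp (μ[f|m]) 2 μ := by
  have hint : Integrable f μ := hf.integrable one_le_two
  set g : Ω → ℝ := ((condExpL2 ℝ ℝ hm (hf.toLp f) : Lp ℝ 2 μ) : Ω → ℝ) with hg
  have hgL2 : MemLp g 2 μ := Lp.memLp _
  have heq : g =ᵐ[μ] μ[f|m] := by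
    refine ae_eq_condExp_of_forall_setIntegral_eq hm hint
      (fun s hs hμs => integrableOn_condExpL2_of_measure_ne_top hm hμs.ne _) ?_
      (aestronglyMeasurable_condExpL2 hm _)
    intro s hs hμs
    rw [integral_condExpL2_eq hm (hf.toLp f) hs hμs.ne]
    exact integral_congr_ae ((ae_restrict_iff' (hm s hs)).2
      ((hf.coeFn_toLp).mono fun x hx _ => hx))
  exact hgL2.ae_eq heq

lemma condexp_cmul (c : ℝ) (f : Ω → ℝ) :
    μ[fun ω => c * f ω|m] =ᵐ[μ] fun ω => c * (μ[f|m]) ω := by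
  have h0 : (fun ω => c * f ω) =ᵐ[μ] c • f := by
    filter_upwards with ω; simp [smul_eq_mul]
  refine (condExp_congr_ae h0).trans ?_
  filter_upwards [condExp_smul (μ := μ) (m := m) c f] with ω hω
  simpa [smul_eq_mul] using hω

lemma condexp_pullout {f g : Ω → ℝ} (hf : StronglyMeasurable[m] f)
    (hf2 : MemLp f 2 μ) (hg2 : MemLp g 2 μ) :
    μ[fun ω => f ω * g ω|m] =ᵐ[μ] fun ω => f ω * (μ[g|m]) ω := by
  have := condExp_mul_of_stronglyMeasurable_left hf (aux_int_mul hf2 hg2) (hg2.integrable one_le_two)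
  filter_upwards [this] with ω hω
  exact hω

lemma integral_mul_condexp (hm : m ≤ m0) {f g : Ω → ℝ}
    (hfm : StronglyMeasurable[m] f) (hf2 : MemLp f 2 μ) (hg2 : MemLp g 2 μ) :
    ∫ ω, f ω * g ω ∂μ = ∫ ω, f ω * (μ[g|m]) ω ∂μ := by
  rw [← integral_condExp (μ := μ) (f := fun ω => f ω * g ω) hm]
  exact integral_congr_ae (condexp_pullout hfm hf2 hg2)

lemma condexp_add6 {f1 f2 f3 f4 f5 f6 : Ω → ℝ}
    (h1 : Integrable f1 μ) (h2 : Integrable f2 μ) (h3 : Integrable f3 μ)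
    (h4 : Integrable f4 μ) (h5 : Integrable f5 μ) (h6 : Integrable f6 μ) :
    μ[fun ω => f1 ω + f2 ω + f3 ω + f4 ω + f5 ω + f6 ω|m] =ᵐ[μ]
      fun ω => (μ[f1|m]) ω + (μ[f2|m]) ω + (μ[f3|m]) ω + (μ[f4|m]) ω + (μ[f5|m]) ω
        + (μ[f6|m]) ω := by
  have e12 : μ[fun ω => f1 ω + f2 ω|m] =ᵐ[μ] fun ω => (μ[f1|m]) ω + (μ[f2|m]) ω :=
    condExp_add h1 h2 m
  have e123 : μ[fun ω => f1 ω + f2 ω + f3 ω|m] =ᵐ[μ]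
      fun ω => (μ[f1|m]) ω + (μ[f2|m]) ω + (μ[f3|m]) ω :=
    (condExp_add (h1.add h2) h3 m).trans (e12.add Filter.EventuallyEq.rfl)
  have e1234 : μ[fun ω => f1 ω + f2 ω + f3 ω + f4 ω|m] =ᵐ[μ]
      fun ω => (μ[f1|m]) ω + (μ[f2|m]) ω + (μ[f3|m]) ω + (μ[f4|m]) ω :=
    (condExp_add ((h1.add h2).add h3) h4 m).trans (e123.add Filter.EventuallyEq.rfl)
  have e12345 : μ[fun ω => f1 ω + f2 ω + f3 ω + f4 ω + f5 ω|m] =ᵐ[μ]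
      fun ω => (μ[f1|m]) ω + (μ[f2|m]) ω + (μ[f3|m]) ω + (μ[f4|m]) ω + (μ[f5|m]) ω :=
    (condExp_add (((h1.add h2).add h3).add h4) h5 m).trans (e1234.add Filter.EventuallyEq.rfl)
  exact (condExp_add ((((h1.add h2).add h3).add h4).add h5) h6 m).trans
    (e12345.add Filter.EventuallyEq.rfl)

lemma condexp_add2 {f1 f2 : Ω → ℝ} (h1 : Integrable f1 μ) (h2 : Integrable f2 μ) :
    μ[fun ω => f1 ω + f2 ω|m] =ᵐ[μ] fun ω => (μ[f1|m]) ω + (μ[f2|m]) ω :=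
  condExp_add h1 h2 m

end Helpers

theorem stmt2 {Ω : Type*} [MeasurableSpace Ω] (μ : Measure Ω) [IsProbabilityMeasure μ]
    (X : ℝ → Ω → ℝ) (hmeas : ∀ t, Measurable (X t))
    (hL2 : ∀ t, 0 ≤ t → MemLp (X t) 2 μ)
    (hX0 : ∀ ω, X 0 ω = 0)
    (hmean : ∀ t : ℝ, 0 ≤ t → ∫ ω, X t ω ∂μ = 0)
    (hcov : ∀ s t : ℝ, 0 ≤ s → 0 ≤ t → ∫ ω, X t ω * X s ω ∂μ = min t s)
    (a b : ℝ → ℝ → ℝ → ℝ)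
    (hLR : ∀ s t u : ℝ, 0 ≤ s → s < t → t < u →
      μ[X t | sigmaLE X s ⊔ sigmaGE X u] =ᵐ[μ]
        fun ω => a s t u * X s ω + b s t u * X u ω)
    (hindep : ∀ t : ℝ, 0 < t → LinIndep123 μ (X t))
    (A B C D α β : ℝ → ℝ → ℝ → ℝ)
    (hQV : ∀ s t u : ℝ, 0 ≤ s → s < t → t < u →
      μ[fun ω => (X t ω) ^ 2 | sigmaLE X s ⊔ sigmaGE X u] =ᵐ[μ]
        fun ω => A s t u * (X s ω) ^ 2 + B s t u * X s ω * X u ω +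
          C s t u * (X u ω) ^ 2 + D s t u + α s t u * X s ω + β s t u * X u ω)
    (hD : ∀ s t u : ℝ, 0 ≤ s → s < t → t < u → D s t u ≠ 0) :
    (∀ s t u : ℝ, 0 ≤ s → s < t → t < u → b s t u - C s t u ≠ 0) ∧
    (∀ t u : ℝ, 0 ≤ t → t < u → ∃ e f g : ℝ,
      μ[fun ω => (X u ω) ^ 2 | sigmaLE X t] =ᵐ[μ]
        fun ω => e * (X t ω) ^ 2 + f * X t ω + g) ∧
    (∀ s t u : ℝ, 0 ≤ s → s < t → t < u →
      μ[fun ω => (X u ω) ^ 2 - u | sigmaLE X s] =ᵐ[μ]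
        fun ω =>
          (1 + (A s t u + B s t u + C s t u - 1) / (b s t u - C s t u)) *
              ((X s ω) ^ 2 - s) +
            (α s t u + β s t u) / (b s t u - C s t u) * X s ω) := by
  classical
  -- ambient σ-algebra facts
  have hFle : ∀ r : ℝ, sigmaLE X r ≤ ‹MeasurableSpace Ω› := fun r =>
    iSup_le fun v => iSup_le fun _ => (hmeas v).comap_le
  have hGle : ∀ r : ℝ, sigmaGE X r ≤ ‹MeasurableSpace Ω› := fun r =>
    iSup_le fun v => iSup_le fun _ => (hmeas v).comap_le
  have hFGle : ∀ s u : ℝ, sigmaLE X s ⊔ sigmaGE X u ≤ ‹MeasurableSpace Ω› := fun s u =>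
    sup_le (hFle s) (hGle u)
  have hmXF : ∀ s : ℝ, 0 ≤ s → StronglyMeasurable[sigmaLE X s] (X s) := by
    intro s hs
    have h1 : MeasurableSpace.comap (X s) inferInstance ≤ sigmaLE X s :=
      le_biSup (fun r => MeasurableSpace.comap (X r) inferInstance)
        (Set.mem_Icc.mpr ⟨hs, le_rfl⟩)
    exact ((Measurable.of_comap_le le_rfl).mono h1 le_rfl).stronglyMeasurable
  have hmXG : ∀ u : ℝ, StronglyMeasurable[sigmaGE X u] (X u) := by
    intro u
    have h1 : MeasurableSpace.comap (X u) inferInstance ≤ sigmaGE X u :=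
      le_biSup (fun r => MeasurableSpace.comap (X r) inferInstance) (Set.mem_Ici.mpr le_rfl)
    exact ((Measurable.of_comap_le le_rfl).mono h1 le_rfl).stronglyMeasurable
  have hFmono : ∀ s t : ℝ, s ≤ t → sigmaLE X s ≤ sigmaLE X t := by
    intro s t hst
    exact iSup_le fun r => iSup_le fun hr =>
      le_biSup (fun r => MeasurableSpace.comap (X r) inferInstance)
        (Set.Icc_subset_Icc_right hst hr)
  have hmXsFG : ∀ s u : ℝ, 0 ≤ s → StronglyMeasurable[sigmaLE X s ⊔ sigmaGE X u] (X s) :=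
    fun s u hs => (hmXF s hs).mono le_sup_left
  have hmXuFG : ∀ s u : ℝ, StronglyMeasurable[sigmaLE X s ⊔ sigmaGE X u] (X u) :=
    fun s u => (hmXG u).mono le_sup_right
  -- integrability
  have hInt : ∀ t : ℝ, 0 ≤ t → Integrable (X t) μ := fun t ht => (hL2 t ht).integrable one_le_two
  have hIntM : ∀ s t : ℝ, 0 ≤ s → 0 ≤ t → Integrable (fun ω => X s ω * X t ω) μ :=
    fun s t hs ht => aux_int_mul (hL2 s hs) (hL2 t ht)
  have hIntSq : ∀ t : ℝ, 0 ≤ t → Integrable (fun ω => (X t ω) ^ 2) μ :=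
    fun t ht => (hL2 t ht).integrable_sq
  have hcov' : ∀ s t : ℝ, 0 ≤ s → 0 ≤ t → ∫ ω, X s ω * X t ω ∂μ = min s t :=
    fun s t hs ht => hcov t s ht hs
  have hsq : ∀ t : ℝ, 0 ≤ t → ∫ ω, (X t ω) ^ 2 ∂μ = t := by
    intro t ht
    simp_rw [pow_two]
    rw [hcov' t t ht ht, min_self]
  -- coefficient identities from covariance
  have hcoeff : ∀ s t u : ℝ, 0 ≤ s → s < t → t < u →
      s = a s t u * s + b s t u * s ∧ t = a s t u * s + b s t u * u := by
    intro s t u hs hst htu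
    have ht' : 0 ≤ t := hs.trans hst.le
    have hu' : 0 ≤ u := ht'.trans htu.le
    have hLRstu := hLR s t u hs hst htu
    have expand : ∀ f : Ω → ℝ, MemLp f 2 μ →
        StronglyMeasurable[sigmaLE X s ⊔ sigmaGE X u] f →
        ∫ ω, f ω * X t ω ∂μ
          = a s t u * ∫ ω, f ω * X s ω ∂μ + b s t u * ∫ ω, f ω * X u ω ∂μ := by
      intro f hf2 hfm
      rw [integral_mul_condexp (hFGle s u) hfm hf2 (hL2 t ht')]
      have h1 : ∫ ω, f ω * (μ[X t|sigmaLE X s ⊔ sigmaGE X u]) ω ∂μ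
          = ∫ ω, (a s t u * (f ω * X s ω) + b s t u * (f ω * X u ω)) ∂μ := by
        refine integral_congr_ae ?_
        filter_upwards [hLRstu] with ω hω
        rw [hω]; ring
      rw [h1, integral_add ((aux_int_mul hf2 (hL2 s hs)).const_mul _)
        ((aux_int_mul hf2 (hL2 u hu')).const_mul _), integral_const_mul, integral_const_mul]
    constructor
    · have h := expand (X s) (hL2 s hs) (hmXsFG s u hs)
      rw [hcov' s t hs ht', hcov' s s hs hs, hcov' s u hs hu',
        min_eq_left hst.le, min_self, min_eq_left (hst.le.trans htu.le)] at h
      exact h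
    · have h := expand (X u) (hL2 u hu') (hmXuFG s u)
      rw [hcov' u t hu' ht', hcov' u s hu' hs, hcov' u u hu' hu',
        min_eq_right htu.le, min_eq_right (hst.le.trans htu.le), min_self] at h
      exact h
  -- martingale property
  have mart : ∀ s t : ℝ, 0 ≤ s → s < t → μ[X t|sigmaLE X s] =ᵐ[μ] X s := by
    intro s t hs hst
    have ht' : 0 ≤ t := hs.trans hst.le
    rcases eq_or_lt_of_le hs with hs0 | hs0
    · -- s = 0 : trivial σ-algebra
      have hbot : sigmaLE X s = ⊥ := by
        refine le_antisymm ?_ bot_le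
        refine iSup_le fun r => iSup_le fun hr => ?_
        have hr0 : r = 0 := le_antisymm (by simpa [← hs0] using hr.2) hr.1
        subst hr0
        intro S hS
        obtain ⟨T, hT, rfl⟩ := hS
        rw [MeasurableSpace.measurableSet_bot_iff]
        by_cases h0 : (0:ℝ) ∈ T
        · right; ext ω; simp [hX0 ω, h0]
        · left; ext ω; simp [hX0 ω, h0]
      rw [hbot, condExp_bot, hmean t ht']
      filter_upwards with ω
      rw [← hs0, hX0 ω]
    · -- 0 < s
      have hsne : s ≠ 0 := ne_of_gt hs0
      have h2 : ∀ v : ℝ, t < v →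
          (fun ω => (μ[X t|sigmaLE X s]) ω - X s ω) =ᵐ[μ]
          (fun ω => (t - s) / (v - s) * ((μ[X v|sigmaLE X s]) ω - X s ω)) := by
        intro v htv
        have hv' : 0 ≤ v := ht'.trans htv.le
        obtain ⟨e1, e2⟩ := hcoeff s t v hs hst htv
        have hab : a s t v + b s t v = 1 := by
          have h := mul_right_cancel₀ hsne (show (a s t v + b s t v) * s = 1 * s by linarith)
          linarith
        have hvs : v - s ≠ 0 := ne_of_gt (by linarith)
        have hbval : b s t v = (t - s) / (v - s) := by
          rw [eq_div_iff hvs]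
          linear_combination -e2 - s * hab
        have hadd := condexp_add2 (μ := μ) (m := sigmaLE X s)
          (f1 := fun ω => a s t v * X s ω) (f2 := fun ω => b s t v * X v ω)
          ((hInt s hs).const_mul _) ((hInt v hv').const_mul _)
        have hc : μ[X t|sigmaLE X s] =ᵐ[μ]
            fun ω => a s t v * X s ω + b s t v * (μ[X v|sigmaLE X s]) ω := by
          refine ((condExp_condExp_of_le le_sup_left (hFGle s v)).symm.trans
            ((condExp_congr_ae (hLR s t v hs hst htv)).trans ?_))
          refine hadd.trans ?_
          have c1 := condexp_cmul (μ := μ) (m := sigmaLE X s) (a s t v) (X s)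
          have c2 := condexp_cmul (μ := μ) (m := sigmaLE X s) (b s t v) (X v)
          filter_upwards [c1, c2] with ω hc1 hc2
          rw [hc1, hc2, condExp_of_stronglyMeasurable (hFle s) (hmXF s hs) (hInt s hs)]
        filter_upwards [hc] with ω hω
        have ha : a s t v = 1 - b s t v := by linarith
        rw [hω, ha, hbval]; ring
      have hbound : ∀ v : ℝ, s < v →
          ∫ ω, ((μ[X v|sigmaLE X s]) ω - X s ω) ^ 2 ∂μ ≤ v - s := by
        intro v hsv
        have hv' : 0 ≤ v := hs.trans hsv.le
        have hhL2 : MemLp (μ[X v|sigmaLE X s]) 2 μ := aux_memL2_condexp (hFle s) (hL2 v hv')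
        have hgL2 : MemLp (fun ω => (μ[X v|sigmaLE X s]) ω - X s ω) 2 μ :=
          hhL2.sub (hL2 s hs)
        have hgm : StronglyMeasurable[sigmaLE X s]
            (fun ω => (μ[X v|sigmaLE X s]) ω - X s ω) :=
          stronglyMeasurable_condExp.sub (hmXF s hs)
        have e1 : ∫ ω, ((μ[X v|sigmaLE X s]) ω - X s ω) * X v ω ∂μ
            = ∫ ω, ((μ[X v|sigmaLE X s]) ω - X s ω) * (μ[X v|sigmaLE X s]) ω ∂μ :=
          integral_mul_condexp (hFle s) hgm hgL2 (hL2 v hv')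
        have e2 : ∫ ω, ((μ[X v|sigmaLE X s]) ω - X s ω) ^ 2 ∂μ
            = ∫ ω, ((μ[X v|sigmaLE X s]) ω - X s ω) * (X v ω - X s ω) ∂μ := by
          have l1 : ∫ ω, ((μ[X v|sigmaLE X s]) ω - X s ω) * (X v ω - X s ω) ∂μ
              = ∫ ω, ((μ[X v|sigmaLE X s]) ω - X s ω) * X v ω ∂μ
                - ∫ ω, ((μ[X v|sigmaLE X s]) ω - X s ω) * X s ω ∂μ := by
            rw [← integral_sub (aux_int_mul hgL2 (hL2 v hv')) (aux_int_mul hgL2 (hL2 s hs))]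
            refine integral_congr_ae (Filter.Eventually.of_forall fun ω => ?_)
            ring
          rw [l1, e1, ← integral_sub (aux_int_mul hgL2 hhL2) (aux_int_mul hgL2 (hL2 s hs))]
          refine integral_congr_ae (Filter.Eventually.of_forall fun ω => ?_)
          ring
        have hint1 : Integrable (fun ω => ((μ[X v|sigmaLE X s]) ω - X s ω) ^ 2) μ :=
          hgL2.integrable_sq
        have hint2 : Integrable (fun ω => (X v ω - X s ω) ^ 2) μ :=
          ((hL2 v hv').sub (hL2 s hs)).integrable_sq
        have e3 : ∫ ω, ((μ[X v|sigmaLE X s]) ω - X s ω) * (X v ω - X s ω) ∂μ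
            ≤ ∫ ω, (((μ[X v|sigmaLE X s]) ω - X s ω) ^ 2 + (X v ω - X s ω) ^ 2) / 2 ∂μ := by
          refine integral_mono (aux_int_mul hgL2 ((hL2 v hv').sub (hL2 s hs)))
            ((hint1.add hint2).div_const 2) (fun ω => ?_)
          nlinarith [sq_nonneg (((μ[X v|sigmaLE X s]) ω - X s ω) - (X v ω - X s ω))]
        have e3' : ∫ ω, (((μ[X v|sigmaLE X s]) ω - X s ω) ^ 2 + (X v ω - X s ω) ^ 2) / 2 ∂μ
            = ((∫ ω, ((μ[X v|sigmaLE X s]) ω - X s ω) ^ 2 ∂μ)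
              + ∫ ω, (X v ω - X s ω) ^ 2 ∂μ) / 2 := by
          rw [integral_div, integral_add hint1 hint2]
        have e4 : ∫ ω, (X v ω - X s ω) ^ 2 ∂μ = v - s := by
          have l1 : ∫ ω, (X v ω - X s ω) ^ 2 ∂μ
              = ∫ ω, (X v ω ^ 2 - 2 * (X v ω * X s ω) + X s ω ^ 2) ∂μ := by
            refine integral_congr_ae (Filter.Eventually.of_forall fun ω => ?_)
            ring
          have iv2 : Integrable (fun ω => X v ω ^ 2 - 2 * (X v ω * X s ω)) μ :=
            (hIntSq v hv').sub ((hIntM v s hv' hs).const_mul 2)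
          rw [l1, integral_add iv2 (hIntSq s hs),
            integral_sub (hIntSq v hv') ((hIntM v s hv' hs).const_mul 2),
            integral_const_mul, hsq v hv', hsq s hs, hcov' v s hv' hs,
            min_eq_right hsv.le]
          ring
        rw [e2]
        rw [e2] at *
        linarith [e3, e3'.symm ▸ e3]
      -- conclude that the L² distance vanishes
      have hIint : Integrable (fun ω => ((μ[X t|sigmaLE X s]) ω - X s ω) ^ 2) μ :=
        ((aux_memL2_condexp (hFle s) (hL2 t ht')).sub (hL2 s hs)).integrable_sq
      have hInonneg : 0 ≤ ∫ ω, ((μ[X t|sigmaLE X s]) ω - X s ω) ^ 2 ∂μ :=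
        integral_nonneg fun ω => sq_nonneg _
      have hIeq : ∀ v : ℝ, t < v →
          ∫ ω, ((μ[X t|sigmaLE X s]) ω - X s ω) ^ 2 ∂μ
            = ((t - s) / (v - s)) ^ 2 * ∫ ω, ((μ[X v|sigmaLE X s]) ω - X s ω) ^ 2 ∂μ := by
        intro v htv
        rw [← integral_const_mul]
        refine integral_congr_ae ?_
        filter_upwards [h2 v htv] with ω hω
        rw [hω]; ring
      have hIzero : ∫ ω, ((μ[X t|sigmaLE X s]) ω - X s ω) ^ 2 ∂μ = 0 := by
        by_contra hne
        have hpos : 0 < ∫ ω, ((μ[X t|sigmaLE X s]) ω - X s ω) ^ 2 ∂μ :=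
          lt_of_le_of_ne hInonneg (Ne.symm hne)
        set I := ∫ ω, ((μ[X t|sigmaLE X s]) ω - X s ω) ^ 2 ∂μ with hIdef
        set v := max (t + 1) (s + (t - s) ^ 2 / I * 2) with hvdef
        have htv : t < v := lt_of_lt_of_le (by linarith) (le_max_left _ _)
        have hvs2 : (t - s) ^ 2 / I * 2 ≤ v - s := by
          have := le_max_right (t + 1) (s + (t - s) ^ 2 / I * 2)
          have h3 : s + (t - s) ^ 2 / I * 2 ≤ v := this
          linarith
        have hvspos : 0 < v - s := by linarith
        have hb2 := hbound v (hst.trans htv)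
        have hstep : I ≤ (t - s) ^ 2 / (v - s) := by
          rw [hIeq v htv]
          calc ((t - s) / (v - s)) ^ 2 * ∫ ω, ((μ[X v|sigmaLE X s]) ω - X s ω) ^ 2 ∂μ
              ≤ ((t - s) / (v - s)) ^ 2 * (v - s) :=
                mul_le_mul_of_nonneg_left hb2 (sq_nonneg _)
            _ = (t - s) ^ 2 / (v - s) := by
                field_simp
        have hstep2 : (t - s) ^ 2 / (v - s) ≤ I / 2 := by
          rw [div_le_iff₀ hvspos]
          calc (t - s) ^ 2 = I / 2 * ((t - s) ^ 2 / I * 2) := by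
                field_simp
            _ ≤ I / 2 * (v - s) :=
                mul_le_mul_of_nonneg_left hvs2 (by positivity)
        linarith
      have hae := (integral_eq_zero_iff_of_nonneg_ae
        (Filter.Eventually.of_forall fun ω => sq_nonneg _) hIint).mp hIzero
      filter_upwards [hae] with ω hω
      have hω' : ((μ[X t|sigmaLE X s]) ω - X s ω) ^ 2 = 0 := hω
      have := sq_eq_zero_iff.mp hω'
      linarith [this]
  -- the D equation
  have hDeq : ∀ s t u : ℝ, 0 ≤ s → s < t → t < u →
      t = (A s t u + B s t u) * s + C s t u * u + D s t u := by
    intro s t u hs hst htu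
    have ht' : 0 ≤ t := hs.trans hst.le
    have hu' : 0 ≤ u := ht'.trans htu.le
    have hq2 : μ[fun ω => (X t ω) ^ 2|sigmaLE X s ⊔ sigmaGE X u] =ᵐ[μ]
        fun ω => A s t u * (X s ω ^ 2) + B s t u * (X s ω * X u ω) + C s t u * (X u ω ^ 2)
          + D s t u + α s t u * X s ω + β s t u * X u ω :=
      (hQV s t u hs hst htu).trans (Filter.Eventually.of_forall fun ω => by ring)
    have I1 : Integrable (fun ω => A s t u * (X s ω ^ 2)) μ := (hIntSq s hs).const_mul _
    have I2 : Integrable (fun ω => B s t u * (X s ω * X u ω)) μ :=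
      (hIntM s u hs hu').const_mul _
    have I3 : Integrable (fun ω => C s t u * (X u ω ^ 2)) μ := (hIntSq u hu').const_mul _
    have I4 : Integrable (fun _ : Ω => D s t u) μ := integrable_const _
    have I5 : Integrable (fun ω => α s t u * X s ω) μ := (hInt s hs).const_mul _
    have I6 : Integrable (fun ω => β s t u * X u ω) μ := (hInt u hu').const_mul _
    have I12 : Integrable (fun ω => A s t u * (X s ω ^ 2) + B s t u * (X s ω * X u ω)) μ :=
      I1.add I2
    have I123 : Integrable (fun ω => A s t u * (X s ω ^ 2) + B s t u * (X s ω * X u ω)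
        + C s t u * (X u ω ^ 2)) μ := I12.add I3
    have I1234 : Integrable (fun ω => A s t u * (X s ω ^ 2) + B s t u * (X s ω * X u ω)
        + C s t u * (X u ω ^ 2) + D s t u) μ := I123.add I4
    have I12345 : Integrable (fun ω => A s t u * (X s ω ^ 2) + B s t u * (X s ω * X u ω)
        + C s t u * (X u ω ^ 2) + D s t u + α s t u * X s ω) μ := I1234.add I5
    calc t = ∫ ω, (X t ω) ^ 2 ∂μ := (hsq t ht').symm
      _ = ∫ ω, (μ[fun ω' => (X t ω') ^ 2|sigmaLE X s ⊔ sigmaGE X u]) ω ∂μ :=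
          (integral_condExp (hFGle s u)).symm
      _ = (A s t u + B s t u) * s + C s t u * u + D s t u := by
          rw [integral_congr_ae hq2,
            integral_add I12345 I6,
            integral_add I1234 I5,
            integral_add I123 I4,
            integral_add I12 I3,
            integral_add I1 I2,
            integral_const_mul, integral_const_mul, integral_const_mul, integral_const_mul,
            integral_const_mul, integral_const, hsq s hs, hsq u hu', hcov' s u hs hu',
            hmean s hs, hmean u hu', min_eq_left (hst.le.trans htu.le)]
          simp [measure_univ]
          ring
  -- the key identity
  have key : ∀ s t u : ℝ, 0 ≤ s → s < t → t < u →
      (fun ω => (b s t u - C s t u) * (μ[fun ω' => (X u ω') ^ 2|sigmaLE X s]) ω) =ᵐ[μ]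
      (fun ω => (A s t u + B s t u - a s t u) * (X s ω) ^ 2
        + (α s t u + β s t u) * X s ω + D s t u) := by
    intro s t u hs hst htu
    have ht' : 0 ≤ t := hs.trans hst.le
    have hu' : 0 ≤ u := ht'.trans htu.le
    have c_mart_su : μ[X u|sigmaLE X s] =ᵐ[μ] X s := mart s u hs (hst.trans htu)
    have c_sq_s : μ[fun ω => (X s ω) ^ 2|sigmaLE X s] = fun ω => (X s ω) ^ 2 := by
      refine condExp_of_stronglyMeasurable (hFle s) ?_ (hIntSq s hs)
      simp only [pow_two]
      exact (hmXF s hs).mul (hmXF s hs)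
    have c_lin_s : μ[X s|sigmaLE X s] = X s :=
      condExp_of_stronglyMeasurable (hFle s) (hmXF s hs) (hInt s hs)
    have c_pull_su : μ[fun ω => X s ω * X u ω|sigmaLE X s] =ᵐ[μ]
        fun ω => X s ω * (μ[X u|sigmaLE X s]) ω :=
      condexp_pullout (hmXF s hs) (hL2 s hs) (hL2 u hu')
    -- (E3)
    have hq2 : μ[fun ω => (X t ω) ^ 2|sigmaLE X s ⊔ sigmaGE X u] =ᵐ[μ]
        fun ω => A s t u * (X s ω ^ 2) + B s t u * (X s ω * X u ω) + C s t u * (X u ω ^ 2)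
          + D s t u + α s t u * X s ω + β s t u * X u ω :=
      (hQV s t u hs hst htu).trans (Filter.Eventually.of_forall fun ω => by ring)
    have I1 : Integrable (fun ω => A s t u * (X s ω ^ 2)) μ := (hIntSq s hs).const_mul _
    have I2 : Integrable (fun ω => B s t u * (X s ω * X u ω)) μ :=
      (hIntM s u hs hu').const_mul _
    have I3 : Integrable (fun ω => C s t u * (X u ω ^ 2)) μ := (hIntSq u hu').const_mul _
    have I4 : Integrable (fun _ : Ω => D s t u) μ := integrable_const _
    have I5 : Integrable (fun ω => α s t u * X s ω) μ := (hInt s hs).const_mul _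
    have I6 : Integrable (fun ω => β s t u * X u ω) μ := (hInt u hu').const_mul _
    have step1 : μ[fun ω => (X t ω) ^ 2|sigmaLE X s] =ᵐ[μ]
        μ[fun ω => A s t u * (X s ω ^ 2) + B s t u * (X s ω * X u ω) + C s t u * (X u ω ^ 2)
          + D s t u + α s t u * X s ω + β s t u * X u ω|sigmaLE X s] :=
      (condExp_condExp_of_le le_sup_left (hFGle s u)).symm.trans (condExp_congr_ae hq2)
    have step2 := condexp_add6 (μ := μ) (m := sigmaLE X s) I1 I2 I3 I4 I5 I6
    have t1 : μ[fun ω => A s t u * (X s ω ^ 2)|sigmaLE X s] =ᵐ[μ]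
        fun ω => A s t u * (X s ω ^ 2) := by
      have h := condexp_cmul (μ := μ) (m := sigmaLE X s) (A s t u) (fun ω => (X s ω) ^ 2)
      rw [c_sq_s] at h
      exact h
    have t2 : μ[fun ω => B s t u * (X s ω * X u ω)|sigmaLE X s] =ᵐ[μ]
        fun ω => B s t u * (X s ω * X s ω) := by
      refine (condexp_cmul (μ := μ) (m := sigmaLE X s) (B s t u)
        (fun ω => X s ω * X u ω)).trans ?_
      filter_upwards [c_pull_su, c_mart_su] with ω hp hq
      rw [hp, hq]
    have t3 : μ[fun ω => C s t u * (X u ω ^ 2)|sigmaLE X s] =ᵐ[μ]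
        fun ω => C s t u * (μ[fun ω' => (X u ω') ^ 2|sigmaLE X s]) ω :=
      condexp_cmul (μ := μ) (m := sigmaLE X s) (C s t u) (fun ω => (X u ω) ^ 2)
    have t4 : μ[fun _ : Ω => D s t u|sigmaLE X s] = fun _ => D s t u :=
      condExp_const (hFle s) _
    have t5 : μ[fun ω => α s t u * X s ω|sigmaLE X s] =ᵐ[μ]
        fun ω => α s t u * X s ω := by
      have h := condexp_cmul (μ := μ) (m := sigmaLE X s) (α s t u) (X s)
      rw [c_lin_s] at h
      exact h
    have t6 : μ[fun ω => β s t u * X u ω|sigmaLE X s] =ᵐ[μ]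
        fun ω => β s t u * X s ω := by
      refine (condexp_cmul (μ := μ) (m := sigmaLE X s) (β s t u) (X u)).trans ?_
      filter_upwards [c_mart_su] with ω hq
      rw [hq]
    have E3 : μ[fun ω => (X t ω) ^ 2|sigmaLE X s] =ᵐ[μ]
        fun ω => (A s t u + B s t u) * (X s ω) ^ 2
          + C s t u * (μ[fun ω' => (X u ω') ^ 2|sigmaLE X s]) ω + D s t u
          + (α s t u + β s t u) * X s ω := by
      refine step1.trans (step2.trans ?_)
      filter_upwards [t1, t2, t3, t5, t6] with ω h1 h2 h3 h5 h6
      rw [h1, h2, h3, h5, h6, t4]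
      ring
    -- (E1)
    have hpull_ut : μ[fun ω => X u ω * X t ω|sigmaLE X s ⊔ sigmaGE X u] =ᵐ[μ]
        fun ω => X u ω * (μ[X t|sigmaLE X s ⊔ sigmaGE X u]) ω :=
      condexp_pullout (hmXuFG s u) (hL2 u hu') (hL2 t ht')
    have hGc : μ[fun ω => X u ω * X t ω|sigmaLE X s ⊔ sigmaGE X u] =ᵐ[μ]
        fun ω => a s t u * (X s ω * X u ω) + b s t u * (X u ω ^ 2) := by
      filter_upwards [hpull_ut, hLR s t u hs hst htu] with ω h1 h2
      rw [h1, h2]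
      ring
    have J1 : Integrable (fun ω => a s t u * (X s ω * X u ω)) μ :=
      (hIntM s u hs hu').const_mul _
    have J2 : Integrable (fun ω => b s t u * (X u ω ^ 2)) μ := (hIntSq u hu').const_mul _
    have E1 : μ[fun ω => X u ω * X t ω|sigmaLE X s] =ᵐ[μ]
        fun ω => a s t u * (X s ω) ^ 2
          + b s t u * (μ[fun ω' => (X u ω') ^ 2|sigmaLE X s]) ω := by
      refine ((condExp_condExp_of_le le_sup_left (hFGle s u)).symm.trans
        ((condExp_congr_ae hGc).trans ?_))
      refine (condexp_add2 (μ := μ) (m := sigmaLE X s)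
        (f1 := fun ω => a s t u * (X s ω * X u ω))
        (f2 := fun ω => b s t u * (X u ω ^ 2)) J1 J2).trans ?_
      have d1 : μ[fun ω => a s t u * (X s ω * X u ω)|sigmaLE X s] =ᵐ[μ]
          fun ω => a s t u * (X s ω * X s ω) := by
        refine (condexp_cmul (μ := μ) (m := sigmaLE X s) (a s t u)
          (fun ω => X s ω * X u ω)).trans ?_
        filter_upwards [c_pull_su, c_mart_su] with ω hp hq
        rw [hp, hq]
      have d2 : μ[fun ω => b s t u * (X u ω ^ 2)|sigmaLE X s] =ᵐ[μ]
          fun ω => b s t u * (μ[fun ω' => (X u ω') ^ 2|sigmaLE X s]) ω :=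
        condexp_cmul (μ := μ) (m := sigmaLE X s) (b s t u) (fun ω => (X u ω) ^ 2)
      filter_upwards [d1, d2] with ω h1 h2
      rw [h1, h2]
      ring
    -- (E2)
    have hpull_tu : μ[fun ω => X t ω * X u ω|sigmaLE X t] =ᵐ[μ]
        fun ω => X t ω * (μ[X u|sigmaLE X t]) ω :=
      condexp_pullout (hmXF t ht') (hL2 t ht') (hL2 u hu')
    have hFt : μ[fun ω => X t ω * X u ω|sigmaLE X t] =ᵐ[μ] fun ω => (X t ω) ^ 2 := by
      filter_upwards [hpull_tu, mart t u ht' htu] with ω h1 h2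
      rw [h1, h2]
      ring
    have E2 : μ[fun ω => X u ω * X t ω|sigmaLE X s] =ᵐ[μ]
        μ[fun ω => (X t ω) ^ 2|sigmaLE X s] := by
      have swap : μ[fun ω => X u ω * X t ω|sigmaLE X s] =ᵐ[μ]
          μ[fun ω => X t ω * X u ω|sigmaLE X s] :=
        condExp_congr_ae (Filter.Eventually.of_forall fun ω => mul_comm _ _)
      exact swap.trans ((condExp_condExp_of_le (hFmono s t hst.le) (hFle t)).symm.trans
        (condExp_congr_ae hFt))
    filter_upwards [E1, E2, E3] with ω h1 h2 h3
    have e := (h1.symm.trans h2).trans h3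
    linarith [e]
  -- part 1
  have part1 : ∀ s t u : ℝ, 0 ≤ s → s < t → t < u → b s t u - C s t u ≠ 0 := by
    intro s t u hs hst htu hbc0
    have k := key s t u hs hst htu
    have k0 : (fun ω => D s t u + (α s t u + β s t u) * X s ω
        + (A s t u + B s t u - a s t u) * (X s ω) ^ 2) =ᵐ[μ] (fun _ => (0:ℝ)) := by
      filter_upwards [k] with ω hω
      rw [hbc0, zero_mul] at hω
      show D s t u + (α s t u + β s t u) * X s ω
        + (A s t u + B s t u - a s t u) * (X s ω) ^ 2 = 0
      linarith [hω]
    rcases eq_or_lt_of_le hs with hs0 | hs0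
    · subst hs0
      have hμne : (μ : Measure Ω) ≠ 0 := IsProbabilityMeasure.ne_zero μ
      haveI : (ae μ).NeBot := ae_neBot.mpr hμne
      obtain ⟨ω, hω⟩ := k0.exists
      have hω' : D 0 t u + (α 0 t u + β 0 t u) * X 0 ω
          + (A 0 t u + B 0 t u - a 0 t u) * (X 0 ω) ^ 2 = 0 := hω
      rw [hX0 ω] at hω'
      norm_num at hω'
      exact hD 0 t u le_rfl hst htu hω'
    · have h := (hindep s hs0 (D s t u) (α s t u + β s t u)
        (A s t u + B s t u - a s t u) k0).1
      exact hD s t u hs hst htu h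
  refine ⟨part1, ?_, ?_⟩
  · -- quadratic polynomial form
    intro t u ht htu
    set t' := (t + u) / 2 with ht'def
    have h1 : t < t' := by rw [ht'def]; linarith
    have h2 : t' < u := by rw [ht'def]; linarith
    have hbC := part1 t t' u ht h1 h2
    have k := key t t' u ht h1 h2
    refine ⟨(A t t' u + B t t' u - a t t' u) / (b t t' u - C t t' u),
      (α t t' u + β t t' u) / (b t t' u - C t t' u),
      D t t' u / (b t t' u - C t t' u), ?_⟩
    filter_upwards [k] with ω hω
    apply mul_left_cancel₀ hbC
    rw [hω]
    field_simp
  · -- the final formula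
    intro s t u hs hst htu
    have ht' : 0 ≤ t := hs.trans hst.le
    have hu' : 0 ≤ u := ht'.trans htu.le
    have hbC := part1 s t u hs hst htu
    have k := key s t u hs hst htu
    obtain ⟨e1, e2⟩ := hcoeff s t u hs hst htu
    have hDq := hDeq s t u hs hst htu
    have csub : μ[fun ω => (X u ω) ^ 2 - u|sigmaLE X s] =ᵐ[μ]
        fun ω => (μ[fun ω' => (X u ω') ^ 2|sigmaLE X s]) ω - u := by
      have hs1 : μ[fun ω => (X u ω) ^ 2 - u|sigmaLE X s] =ᵐ[μ]
          μ[(fun ω => (X u ω) ^ 2) - (fun _ => u)|sigmaLE X s] :=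
        condExp_congr_ae (Filter.Eventually.of_forall fun ω => rfl)
      refine hs1.trans ?_
      refine (condExp_sub (hIntSq u hu') (integrable_const (u : ℝ)) (sigmaLE X s)).trans ?_
      have hc : μ[fun _ : Ω => (u : ℝ)|sigmaLE X s] = fun _ => (u : ℝ) :=
        condExp_const (hFle s) _
      filter_upwards with ω
      simp only [Pi.sub_apply]
      rw [hc]
    rcases eq_or_lt_of_le hs with hs0 | hs0
    · -- s = 0
      subst hs0
      have ht1 : t = b 0 t u * u := by simpa using e2
      have ht2 : t = C 0 t u * u + D 0 t u := by simpa using hDq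
      filter_upwards [csub, k] with ω h1 h2
      have hx : X 0 ω = 0 := hX0 ω
      have hmval : (μ[fun ω' => (X u ω') ^ 2|sigmaLE X 0]) ω = u := by
        apply mul_left_cancel₀ hbC
        rw [h2, hx]
        norm_num
        linarith [ht1, ht2]
      rw [h1, hmval, hx]
      norm_num
    · -- s > 0
      have hsne : s ≠ 0 := ne_of_gt hs0
      have hab : a s t u + b s t u = 1 := by
        have h := mul_right_cancel₀ hsne (show (a s t u + b s t u) * s = 1 * s by linarith)
        linarith
      have haval : a s t u = 1 - b s t u := by linarith
      have hDval : D s t u = (1 - b s t u) * s + b s t u * u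
          - (A s t u + B s t u) * s - C s t u * u := by
        linear_combination e2 - hDq + s * hab
      filter_upwards [csub, k] with ω h1 h2
      rw [h1]
      apply mul_left_cancel₀ hbC
      rw [mul_sub, h2, haval, hDval]
      field_simp
      ring
end
end

section
/- Let (X_t)_{t≥0} satisfy (cov), (LR), and (CV), suppose E(|X_t|^p) < ∞ for all t ≥ 0 and p > 0, suppose 1, X_t, X_t² are linearly independent for all t > 0, and suppose there exist θ ∈ ℝ and τ ≥ 0 such that for all 0 < s < t, almost surely E(X_s² | F_{≥t}) = (s(s+τ)/(t(t+τ))) X_t² + (s(t−s)θ/(t(t+τ))) X_t + s(t−s)/(t+τ). Then E(X_t³) = t·θ for all t ≥ 0, and there exists q ∈ (−1,1] such that for all 0 ≤ s < t: E(X_t⁴) = (1+q)·t(t+τ) + t(t+θ²), E((X_t−X_s)²) = t−s, E((X_t−X_s)³) = θ(t−s), and E((X_t−X_s)⁴) = (t−s)·(6s + θ² − τ + (2+q)(t+τ−3s)). -/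
open MeasureTheory

noncomputable section

set_option linter.unusedSectionVars false

section Infra

variable {Ω : Type*} [m0 : MeasurableSpace Ω] {μ : Measure Ω} [IsProbabilityMeasure μ]
  {X : ℝ → Ω → ℝ}

lemma sigmaLE_le (hmeas : ∀ t, Measurable (X t)) (s : ℝ) :
    sigmaLE X s ≤ m0 :=
  iSup₂_le fun r _ => measurable_iff_comap_le.mp (hmeas r)

lemma sigmaGE_le (hmeas : ∀ t, Measurable (X t)) (u : ℝ) :
    sigmaGE X u ≤ m0 :=
  iSup₂_le fun r _ => measurable_iff_comap_le.mp (hmeas r)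

lemma measurable_sigmaLE {s r : ℝ} (h0 : 0 ≤ r) (hrs : r ≤ s) :
    Measurable[sigmaLE X s] (X r) :=
  measurable_iff_comap_le.mpr (le_iSup₂ (f := fun r _ => MeasurableSpace.comap (X r) inferInstance)
    r ⟨h0, hrs⟩)

lemma measurable_sigmaGE {u r : ℝ} (hur : u ≤ r) :
    Measurable[sigmaGE X u] (X r) :=
  measurable_iff_comap_le.mpr (le_iSup₂ (f := fun r _ => MeasurableSpace.comap (X r) inferInstance)
    r hur)

/-- pull-out lemma : integrate a conditional expectation identity against a weight. -/
lemma pullout {m : MeasurableSpace Ω} (hm : m ≤ m0) {w f g : Ω → ℝ}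
    (hw : Measurable[m] w) (hf : Integrable f μ)
    (hwf : Integrable (fun ω => w ω * f ω) μ)
    (hfg : μ[f|m] =ᵐ[μ] g) :
    ∫ ω, w ω * f ω ∂μ = ∫ ω, w ω * g ω ∂μ := by
  have h1 : μ[fun ω => w ω * f ω|m] =ᵐ[μ] fun ω => w ω * (μ[f|m]) ω := by
    have := condExp_mul_of_stronglyMeasurable_left (μ := μ) (m := m) hw.stronglyMeasurable hwf hf
    exact this
  calc ∫ ω, w ω * f ω ∂μ = ∫ ω, (μ[fun ω => w ω * f ω|m]) ω ∂μ :=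
        (integral_condExp (μ := μ) (f := fun ω => w ω * f ω) hm).symm
    _ = ∫ ω, w ω * (μ[f|m]) ω ∂μ := integral_congr_ae h1
    _ = ∫ ω, w ω * g ω ∂μ := by
        refine integral_congr_ae ?_
        filter_upwards [hfg] with ω h
        rw [h]

lemma abs_pow_mul_pow_le (x y : ℝ) {i j : ℕ} (hij : i + j ≤ 8) :
    |x| ^ i * |y| ^ j ≤ x ^ 8 + y ^ 8 + 2 := by
  have key : ∀ z : ℝ, ∀ k : ℕ, k ≤ 8 → |z| ^ k ≤ z ^ 8 + 1 := by
    intro z k hk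
    rcases le_total |z| 1 with hz | hz
    · have h1 : |z| ^ k ≤ 1 := pow_le_one₀ (abs_nonneg z) hz
      have h2 : (0:ℝ) ≤ z ^ 8 := by positivity
      linarith
    · have h1 : |z| ^ k ≤ |z| ^ 8 := pow_le_pow_right₀ hz hk
      have h2 : |z| ^ 8 = z ^ 8 := by
        rw [← abs_pow]
        exact abs_of_nonneg (by positivity)
      nlinarith
  rcases le_total |x| |y| with h | h
  · have : |x| ^ i * |y| ^ j ≤ |y| ^ (i + j) := by
      rw [pow_add]
      exact mul_le_mul_of_nonneg_right (pow_le_pow_left₀ (abs_nonneg x) h i)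
        (pow_nonneg (abs_nonneg y) j)
    have h2 := key y (i + j) hij
    have hx8 : (0:ℝ) ≤ x ^ 8 := by positivity
    nlinarith
  · have : |x| ^ i * |y| ^ j ≤ |x| ^ (i + j) := by
      rw [pow_add]
      exact mul_le_mul_of_nonneg_left (pow_le_pow_left₀ (abs_nonneg y) h j)
        (pow_nonneg (abs_nonneg x) i)
    have h2 := key x (i + j) hij
    have hy8 : (0:ℝ) ≤ y ^ 8 := by positivity
    nlinarith

lemma int_monomial (hmeas : ∀ t, Measurable (X t))
    (hmom : ∀ t : ℝ, 0 ≤ t → ∀ p : ℝ, 0 < p → Integrable (fun ω => |X t ω| ^ p) μ)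
    {a b : ℝ} (ha : 0 ≤ a) (hb : 0 ≤ b) (i j : ℕ) (hij : i + j ≤ 8) :
    Integrable (fun ω => X a ω ^ i * X b ω ^ j) μ := by
  have h8 : ∀ c : ℝ, 0 ≤ c → Integrable (fun ω => X c ω ^ 8) μ := by
    intro c hc
    have h := hmom c hc 8 (by norm_num)
    have heq : (fun ω => |X c ω| ^ (8:ℝ)) = fun ω => X c ω ^ 8 := by
      funext ω
      rw [show ((8:ℝ) = ((8:ℕ):ℝ)) by norm_num, Real.rpow_natCast, ← abs_pow,
        abs_of_nonneg (by positivity)]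
    rwa [heq] at h
  refine Integrable.mono' (((h8 a ha).add (h8 b hb)).add (integrable_const 2)) ?_ ?_
  · exact (((hmeas a).pow_const i).mul ((hmeas b).pow_const j)).aestronglyMeasurable
  · filter_upwards with ω
    simpa using abs_pow_mul_pow_le (X a ω) (X b ω) hij

end Infra

section AffineLemmas

lemma affine_forward {ψ : ℝ → ℝ} {s t C D : ℝ} (hs : 0 ≤ s) (hst : s < t)
    (hrel : ∀ u, t < u → (u - s) * ψ t = (u - t) * C + (t - s) * ψ u)
    (hD : 0 ≤ D) (hgrowth : ∀ u, t < u → |ψ u| ≤ D * Real.sqrt u) : ψ t = C := by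
  have key : ∀ ε : ℝ, 0 < ε → |ψ t - C| ≤ ε := by
    intro ε hε
    set K := (t - s) * (D + |C|) with hK
    have hK0 : 0 ≤ K := by
      have := abs_nonneg C
      apply mul_nonneg <;> nlinarith
    set B := 2 * K / ε + 1 with hB
    have hB1 : 1 ≤ B := by
      have : 0 ≤ 2 * K / ε := by positivity
      simp only [hB]; linarith
    set u := max (t + 1) (max (2 * s + 1) (B ^ 2)) with hu
    have hut : t < u := lt_of_lt_of_le (by linarith) (le_max_left _ _)
    have hus : 2 * s + 1 ≤ u := le_trans (le_max_left _ _) (le_max_right _ _)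
    have huB : B ^ 2 ≤ u := le_trans (le_max_right _ _) (le_max_right _ _)
    have hu0 : 0 < u := by nlinarith
    have hsq : Real.sqrt u * Real.sqrt u = u := Real.mul_self_sqrt hu0.le
    have hsB : B ≤ Real.sqrt u := by
      have := Real.sqrt_le_sqrt huB
      rwa [Real.sqrt_sq (by linarith : (0:ℝ) ≤ B)] at this
    have hs1 : 1 ≤ Real.sqrt u := le_trans hB1 hsB
    have h1 : (u - s) * (ψ t - C) = (t - s) * (ψ u - C) := by
      have := hrel u hut
      ring_nf
      ring_nf at this
      linarith
    have h2 : |ψ t - C| * (u - s) ≤ K * Real.sqrt u := by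
      have e1 : |ψ t - C| * (u - s) = |(u - s) * (ψ t - C)| := by
        rw [abs_mul, abs_of_nonneg (by linarith : (0:ℝ) ≤ u - s)]; ring
      rw [e1, h1, abs_mul, abs_of_nonneg (by linarith : (0:ℝ) ≤ t - s)]
      have h3 : |ψ u - C| ≤ D * Real.sqrt u + |C| := by
        have := hgrowth u hut
        have := abs_sub_abs_le_abs_sub (ψ u) C
        have h4 := abs_sub (ψ u) C
        calc |ψ u - C| ≤ |ψ u| + |C| := abs_sub _ _
          _ ≤ D * Real.sqrt u + |C| := by linarith [hgrowth u hut]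
      calc (t - s) * |ψ u - C| ≤ (t - s) * (D * Real.sqrt u + |C|) := by
            apply mul_le_mul_of_nonneg_left h3 (by linarith)
        _ ≤ K * Real.sqrt u := by
            rw [hK]
            nlinarith [mul_nonneg (mul_nonneg (by linarith : (0:ℝ) ≤ t - s) (abs_nonneg C))
              (by linarith : (0:ℝ) ≤ Real.sqrt u - 1)]
    have hεB : 2 * K ≤ ε * B := by
      rw [hB]; rw [mul_add, mul_one, mul_div_cancel₀]
      · linarith
      · exact ne_of_gt hε
    -- |ψ t - C| * u ≤ 2 K sqrt u ≤ ε * sqrt u * sqrt u = ε u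
    have h5 : |ψ t - C| * u ≤ 2 * K * Real.sqrt u := by
      have hu2 : u ≤ 2 * (u - s) := by linarith
      have habs : 0 ≤ |ψ t - C| := abs_nonneg _
      nlinarith [Real.sqrt_nonneg u]
    have h6 : 2 * K * Real.sqrt u ≤ ε * u := by
      have := mul_le_mul_of_nonneg_right hεB (Real.sqrt_nonneg u)
      have := mul_le_mul_of_nonneg_left hsB (le_of_lt hε)
      nlinarith [Real.sqrt_nonneg u]
    have habs : 0 ≤ |ψ t - C| := abs_nonneg _
    nlinarith
  have : |ψ t - C| ≤ 0 := by
    by_contra h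
    push_neg at h
    have := key (|ψ t - C| / 2) (by linarith)
    linarith
  have := abs_nonneg (ψ t - C)
  have : ψ t - C = 0 := by
    apply abs_eq_zero.mp; linarith
  linarith

lemma affine_backward {ψ : ℝ → ℝ} {t u C D : ℝ} (h0t : 0 < t) (htu : t < u)
    (hrel : ∀ s, 0 < s → s < t → (u - s) * ψ t = (u - t) * ψ s + (t - s) * C)
    (hD : 0 ≤ D) (hgrowth : ∀ s, 0 < s → s < t → |ψ s| ≤ D * Real.sqrt s) :
    u * ψ t = t * C := by
  have key : ∀ ε : ℝ, 0 < ε → |u * ψ t - t * C| ≤ ε := by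
    intro ε hε
    obtain ⟨A, hA⟩ : ∃ A : ℝ, A = 2 * (u - t) * D + 1 := ⟨_, rfl⟩
    obtain ⟨Bc, hBc⟩ : ∃ Bc : ℝ, Bc = |ψ t| + |C| := ⟨_, rfl⟩
    have hA0 : 0 < A := by rw [hA]; nlinarith
    have hBc0 : 0 ≤ Bc := by rw [hBc]; positivity
    obtain ⟨s, hs⟩ : ∃ s : ℝ, s = min (t / 2) (min ((ε / A) ^ 2) (ε / (2 * Bc + 1))) := ⟨_, rfl⟩
    have hs0 : 0 < s := by
      rw [hs]
      apply lt_min (by linarith)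
      apply lt_min (by positivity) (by positivity)
    have hst : s < t := by
      rw [hs]; exact lt_of_le_of_lt (min_le_left _ _) (by linarith)
    have hsA : s ≤ (ε / A) ^ 2 := by
      rw [hs]; exact le_trans (min_le_right _ _) (min_le_left _ _)
    have hsB : s ≤ ε / (2 * Bc + 1) := by
      rw [hs]; exact le_trans (min_le_right _ _) (min_le_right _ _)
    have hsqA : Real.sqrt s ≤ ε / A := by
      have := Real.sqrt_le_sqrt hsA
      rwa [Real.sqrt_sq (by positivity : (0:ℝ) ≤ ε / A)] at this
    have h1 : u * ψ t - t * C = (u - t) * ψ s + s * (ψ t - C) := by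
      have := hrel s hs0 hst
      ring_nf; ring_nf at this; linarith
    have h2 : |u * ψ t - t * C| ≤ (u - t) * (D * Real.sqrt s) + s * Bc := by
      rw [h1]
      calc |(u - t) * ψ s + s * (ψ t - C)| ≤ |(u - t) * ψ s| + |s * (ψ t - C)| := abs_add_le _ _
        _ ≤ (u - t) * (D * Real.sqrt s) + s * Bc := by
            rw [abs_mul, abs_mul, abs_of_nonneg (by linarith : (0:ℝ) ≤ u - t),
              abs_of_nonneg hs0.le]
            have g1 := hgrowth s hs0 hst
            have g2 : |ψ t - C| ≤ Bc := by rw [hBc]; exact abs_sub _ _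
            have : (u - t) * |ψ s| ≤ (u - t) * (D * Real.sqrt s) :=
              mul_le_mul_of_nonneg_left g1 (by linarith)
            have : s * |ψ t - C| ≤ s * Bc := mul_le_mul_of_nonneg_left g2 hs0.le
            linarith
    have h3 : (u - t) * (D * Real.sqrt s) ≤ ε / 2 := by
      have : (u - t) * D * Real.sqrt s ≤ (u - t) * D * (ε / A) :=
        mul_le_mul_of_nonneg_left hsqA (by nlinarith)
      have hAd : (u - t) * D * (ε / A) ≤ ε / 2 := by
        rw [mul_div_assoc', div_le_div_iff₀ hA0 two_pos]
        rw [hA] at *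
        nlinarith
      nlinarith
    have h4 : s * Bc ≤ ε / 2 := by
      have : s * (2 * Bc + 1) ≤ ε := by
        have := mul_le_mul_of_nonneg_right hsB (by linarith : (0:ℝ) ≤ 2 * Bc + 1)
        rwa [div_mul_cancel₀ _ (by linarith : (2 * Bc + 1) ≠ 0)] at this
      nlinarith
    exact h2.trans (by linarith)
  by_contra h
  have habs : 0 < |u * ψ t - t * C| := by
    apply abs_pos.mpr
    intro hc; apply h; linarith
  have := key (|u * ψ t - t * C| / 2) (by linarith)
  linarith

end AffineLemmas

section Moments

variable {Ω : Type*} [m0 : MeasurableSpace Ω] {μ : Measure Ω} [IsProbabilityMeasure μ]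
  {X : ℝ → Ω → ℝ}

lemma ieq {f g : Ω → ℝ} (h : ∀ ω, f ω = g ω) : ∫ ω, f ω ∂μ = ∫ ω, g ω ∂μ :=
  congrArg (integral μ) (funext h)

lemma am_gm (a b c : ℝ) (hc : 0 < c) : |a * b| ≤ (c * a ^ 2 + b ^ 2 / c) / 2 := by
  have h1 : 2 * c * |a * b| ≤ c ^ 2 * a ^ 2 + b ^ 2 := by
    rcases abs_cases (a * b) with ⟨h, _⟩ | ⟨h, _⟩ <;> rw [h]
    · nlinarith [sq_nonneg (c * a - b)]
    · nlinarith [sq_nonneg (c * a + b)]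
  have e : (c * a ^ 2 + b ^ 2 / c) / 2 = (c ^ 2 * a ^ 2 + b ^ 2) / (2 * c) := by
    field_simp
  rw [e, le_div_iff₀ (by positivity)]
  linarith

/-- the second moment of `X t` is `t`. -/
lemma mom_sq (hcov : ∀ s t : ℝ, 0 ≤ s → 0 ≤ t → ∫ ω, X t ω * X s ω ∂μ = min t s)
    {t : ℝ} (ht : 0 ≤ t) : ∫ ω, X t ω ^ 2 ∂μ = t := by
  have h := hcov t t ht ht
  rw [min_self] at h
  have h2 : ∫ ω, X t ω ^ 2 ∂μ = ∫ ω, X t ω * X t ω ∂μ := ieq fun ω => by ring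
  rw [h2, h]

/-- consequence of (CV) with weight `X s ^ k`. -/
lemma useCV (hmeas : ∀ t, Measurable (X t))
    (hmom : ∀ t : ℝ, 0 ≤ t → ∀ p : ℝ, 0 < p → Integrable (fun ω => |X t ω| ^ p) μ)
    (hmean : ∀ t : ℝ, 0 ≤ t → ∫ ω, X t ω ∂μ = 0)
    (hCV : ∀ s t : ℝ, 0 ≤ s → s ≤ t →
      μ[fun ω => (X t ω) ^ 2 | sigmaLE X s] =ᵐ[μ] fun ω => (X s ω) ^ 2 + t - s)
    {s t : ℝ} (hs : 0 ≤ s) (hst : s ≤ t) {k : ℕ} (hk : k ≤ 3) :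
    ∫ ω, X s ω ^ k * X t ω ^ 2 ∂μ
      = (∫ ω, X s ω ^ (k + 2) ∂μ) + (t - s) * ∫ ω, X s ω ^ k ∂μ := by
  have ht : 0 ≤ t := le_trans hs hst
  have h := pullout (μ := μ) (sigmaLE_le hmeas s)
    (w := fun ω => X s ω ^ k) (f := fun ω => X t ω ^ 2)
    (g := fun ω => X s ω ^ 2 + t - s)
    ((measurable_sigmaLE hs le_rfl).pow_const k)
    (by simpa using int_monomial hmeas hmom ht ht 2 0 (by norm_num))
    (int_monomial hmeas hmom hs ht k 2 (by omega))
    (by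
      have := hCV s t hs hst
      exact this)
  rw [h]
  have h2 : ∫ ω, X s ω ^ k * (X s ω ^ 2 + t - s) ∂μ
      = ∫ ω, (X s ω ^ (k + 2) + (t - s) * X s ω ^ k) ∂μ :=
    ieq fun ω => by rw [pow_add]; ring
  rw [h2, integral_add (by simpa using int_monomial hmeas hmom hs hs (k+2) 0 (by omega))
    ((by simpa using int_monomial hmeas hmom hs hs k 0 (by omega) :
      Integrable (fun ω => X s ω ^ k) μ).const_mul _), integral_const_mul]

/-- consequence of (hfut) with weight `X t ^ k`. -/
lemma useFut (hmeas : ∀ t, Measurable (X t))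
    (hmom : ∀ t : ℝ, 0 ≤ t → ∀ p : ℝ, 0 < p → Integrable (fun ω => |X t ω| ^ p) μ)
    {θ τ : ℝ}
    (hfut : ∀ s t : ℝ, 0 < s → s < t →
      μ[fun ω => (X s ω) ^ 2 | sigmaGE X t] =ᵐ[μ]
        fun ω => s * (s + τ) / (t * (t + τ)) * (X t ω) ^ 2 +
          s * (t - s) * θ / (t * (t + τ)) * X t ω + s * (t - s) / (t + τ))
    {s t : ℝ} (hs : 0 < s) (hst : s < t) {k : ℕ} (hk : k ≤ 2) :
    ∫ ω, X t ω ^ k * X s ω ^ 2 ∂μ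
      = s * (s + τ) / (t * (t + τ)) * (∫ ω, X t ω ^ (k + 2) ∂μ)
        + s * (t - s) * θ / (t * (t + τ)) * (∫ ω, X t ω ^ (k + 1) ∂μ)
        + s * (t - s) / (t + τ) * (∫ ω, X t ω ^ k ∂μ) := by
  have ht : 0 ≤ t := le_trans hs.le hst.le
  have h := pullout (μ := μ) (sigmaGE_le hmeas t)
    (w := fun ω => X t ω ^ k) (f := fun ω => X s ω ^ 2)
    (g := fun ω => s * (s + τ) / (t * (t + τ)) * (X t ω) ^ 2 +
          s * (t - s) * θ / (t * (t + τ)) * X t ω + s * (t - s) / (t + τ))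
    ((measurable_sigmaGE le_rfl).pow_const k)
    (by simpa using int_monomial hmeas hmom hs.le hs.le 2 0 (by norm_num))
    (int_monomial hmeas hmom ht hs.le k 2 (by omega))
    (hfut s t hs hst)
  rw [h]
  have h2 : ∫ ω, (fun ω => X t ω ^ k) ω * (s * (s + τ) / (t * (t + τ)) * (X t ω) ^ 2 +
          s * (t - s) * θ / (t * (t + τ)) * X t ω + s * (t - s) / (t + τ)) ∂μ
      = ∫ ω, (s * (s + τ) / (t * (t + τ)) * X t ω ^ (k + 2)
          + (s * (t - s) * θ / (t * (t + τ)) * X t ω ^ (k + 1)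
          + s * (t - s) / (t + τ) * X t ω ^ k)) ∂μ :=
    ieq fun ω => by simp only; rw [pow_add, pow_add]; ring
  rw [h2]
  have i1 : Integrable (fun ω => X t ω ^ (k + 2)) μ := by
    simpa using int_monomial hmeas hmom ht ht (k+2) 0 (by omega)
  have i2 : Integrable (fun ω => X t ω ^ (k + 1)) μ := by
    simpa using int_monomial hmeas hmom ht ht (k+1) 0 (by omega)
  have i3 : Integrable (fun ω => X t ω ^ k) μ := by
    simpa using int_monomial hmeas hmom ht ht k 0 (by omega)
  have j23 : Integrable (fun ω => s * (t - s) * θ / (t * (t + τ)) * X t ω ^ (k + 1)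
      + s * (t - s) / (t + τ) * X t ω ^ k) μ := (i2.const_mul _).add (i3.const_mul _)
  rw [integral_add (i1.const_mul _) j23, integral_add (i2.const_mul _) (i3.const_mul _),
    integral_const_mul, integral_const_mul, integral_const_mul]
  ring

/-- consequence of (LR) with a general weight. -/
lemma useLR (hmeas : ∀ t, Measurable (X t))
    (hmom : ∀ t : ℝ, 0 ≤ t → ∀ p : ℝ, 0 < p → Integrable (fun ω => |X t ω| ^ p) μ)
    {a b : ℝ → ℝ → ℝ → ℝ}
    (hLR : ∀ s t u : ℝ, 0 ≤ s → s < t → t < u →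
      μ[X t | sigmaLE X s ⊔ sigmaGE X u] =ᵐ[μ]
        fun ω => a s t u * X s ω + b s t u * X u ω)
    {s t u : ℝ} (hs : 0 ≤ s) (hst : s < t) (htu : t < u) (w : Ω → ℝ)
    (hw : Measurable[sigmaLE X s ⊔ sigmaGE X u] w)
    (hwt : Integrable (fun ω => w ω * X t ω) μ)
    (hws : Integrable (fun ω => w ω * X s ω) μ)
    (hwu : Integrable (fun ω => w ω * X u ω) μ) :
    ∫ ω, w ω * X t ω ∂μ
      = a s t u * ∫ ω, w ω * X s ω ∂μ + b s t u * ∫ ω, w ω * X u ω ∂μ := by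
  have ht : 0 ≤ t := le_trans hs hst.le
  have h := pullout (μ := μ) (sup_le (sigmaLE_le hmeas s) (sigmaGE_le hmeas u))
    (w := w) (f := X t)
    (g := fun ω => a s t u * X s ω + b s t u * X u ω)
    hw
    (by simpa using int_monomial hmeas hmom ht ht 1 0 (by norm_num))
    hwt
    (hLR s t u hs hst htu)
  rw [h]
  have h2 : ∫ ω, w ω * (a s t u * X s ω + b s t u * X u ω) ∂μ
      = ∫ ω, (a s t u * (w ω * X s ω) + b s t u * (w ω * X u ω)) ∂μ :=
    ieq fun ω => by ring
  rw [h2, integral_add (hws.const_mul _) (hwu.const_mul _), integral_const_mul,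
    integral_const_mul]

end Moments

section Transport

variable {Ω : Type*} [m0 : MeasurableSpace Ω] {μ : Measure Ω} [IsProbabilityMeasure μ]
  {X : ℝ → Ω → ℝ}

lemma ab_spec (hmeas : ∀ t, Measurable (X t))
    (hmom : ∀ t : ℝ, 0 ≤ t → ∀ p : ℝ, 0 < p → Integrable (fun ω => |X t ω| ^ p) μ)
    (hcov : ∀ s t : ℝ, 0 ≤ s → 0 ≤ t → ∫ ω, X t ω * X s ω ∂μ = min t s)
    {a b : ℝ → ℝ → ℝ → ℝ}
    (hLR : ∀ s t u : ℝ, 0 ≤ s → s < t → t < u →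
      μ[X t | sigmaLE X s ⊔ sigmaGE X u] =ᵐ[μ]
        fun ω => a s t u * X s ω + b s t u * X u ω)
    {s t u : ℝ} (hs : 0 < s) (hst : s < t) (htu : t < u) :
    a s t u = (u - t) / (u - s) ∧ b s t u = (t - s) / (u - s) := by
  have ht : 0 ≤ t := le_trans hs.le hst.le
  have hu : 0 ≤ u := le_trans ht htu.le
  have i11 : ∀ a' b' : ℝ, 0 ≤ a' → 0 ≤ b' → Integrable (fun ω => X a' ω * X b' ω) μ := by
    intro a' b' ha' hb'
    simpa using int_monomial hmeas hmom ha' hb' 1 1 (by norm_num)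
  have mws : Measurable[sigmaLE X s ⊔ sigmaGE X u] (X s) :=
    (measurable_sigmaLE hs.le le_rfl).mono le_sup_left le_rfl
  have mwu : Measurable[sigmaLE X s ⊔ sigmaGE X u] (X u) :=
    (measurable_sigmaGE le_rfl).mono le_sup_right le_rfl
  have e1 := useLR hmeas hmom hLR hs.le hst htu (X s) mws (i11 s t hs.le ht)
    (i11 s s hs.le hs.le) (i11 s u hs.le hu)
  have e2 := useLR hmeas hmom hLR hs.le hst htu (X u) mwu (i11 u t hu ht)
    (i11 u s hu hs.le) (i11 u u hu hu)
  rw [hcov t s ht hs.le, hcov s s hs.le hs.le, hcov u s hu hs.le] at e1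
  rw [hcov t u ht hu, hcov s u hs.le hu, hcov u u hu hu] at e2
  rw [min_eq_left hst.le, min_self, min_eq_left (le_trans hst.le htu.le)] at e1
  rw [min_eq_right htu.le, min_eq_right (le_trans hst.le htu.le), min_self] at e2
  -- e1 : s = a * s + b * s,  e2 : t = a * s + b * u
  have hsne : s ≠ 0 := ne_of_gt hs
  have hab : a s t u + b s t u = 1 := by
    have h := e1
    field_simp at h
    apply mul_right_cancel₀ hsne
    linarith
  have husne : u - s ≠ 0 := by intro h; nlinarith
  constructor
  · rw [eq_div_iff husne]
    linear_combination u * hab + e2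
  · rw [eq_div_iff husne]
    linear_combination (-s) * hab - e2

lemma growth_bound (hmeas : ∀ t, Measurable (X t))
    (hmom : ∀ t : ℝ, 0 ≤ t → ∀ p : ℝ, 0 < p → Integrable (fun ω => |X t ω| ^ p) μ)
    (hcov : ∀ s t : ℝ, 0 ≤ s → 0 ≤ t → ∫ ω, X t ω * X s ω ∂μ = min t s)
    {c v : ℝ} (hc : 0 ≤ c) (hv : 0 < v) {k : ℕ} (hk : k ≤ 3) :
    |∫ ω, X c ω ^ k * X v ω ∂μ|
      ≤ ((∫ ω, X c ω ^ (2 * k) ∂μ) + 1) / 2 * Real.sqrt v := by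
  have hv' : 0 ≤ v := hv.le
  have hsv : 0 < Real.sqrt v := Real.sqrt_pos.mpr hv
  have i1 : Integrable (fun ω => X c ω ^ k * X v ω) μ := by
    simpa using int_monomial hmeas hmom hc hv' k 1 (by omega)
  have i2k : Integrable (fun ω => X c ω ^ (2 * k)) μ := by
    simpa using int_monomial hmeas hmom hc hc (2*k) 0 (by omega)
  have iv2 : Integrable (fun ω => X v ω ^ 2) μ := by
    simpa using int_monomial hmeas hmom hv' hv' 2 0 (by omega)
  have h1 : |∫ ω, X c ω ^ k * X v ω ∂μ| ≤ ∫ ω, |X c ω ^ k * X v ω| ∂μ := by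
    have h := norm_integral_le_integral_norm (μ := μ) (f := fun ω => X c ω ^ k * X v ω)
    simp only [Real.norm_eq_abs] at h
    exact h
  have h2 : ∫ ω, |X c ω ^ k * X v ω| ∂μ
      ≤ ∫ ω, (Real.sqrt v * X c ω ^ (2 * k) + X v ω ^ 2 / Real.sqrt v) / 2 ∂μ := by
    apply integral_mono i1.abs (((i2k.const_mul _).add (iv2.div_const _)).div_const _)
    intro ω
    have := am_gm (X c ω ^ k) (X v ω) (Real.sqrt v) hsv
    calc |X c ω ^ k * X v ω|
        ≤ (Real.sqrt v * (X c ω ^ k) ^ 2 + X v ω ^ 2 / Real.sqrt v) / 2 := this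
      _ = (Real.sqrt v * X c ω ^ (2 * k) + X v ω ^ 2 / Real.sqrt v) / 2 := by
          rw [← pow_mul, mul_comm k 2]
  have h3 : ∫ ω, (Real.sqrt v * X c ω ^ (2 * k) + X v ω ^ 2 / Real.sqrt v) / 2 ∂μ
      = ((∫ ω, X c ω ^ (2 * k) ∂μ) + 1) / 2 * Real.sqrt v := by
    rw [integral_div, integral_add (i2k.const_mul _) (iv2.div_const _),
      integral_const_mul, integral_div, mom_sq hcov hv', Real.div_sqrt]
    ring
  linarith

lemma fwd (hmeas : ∀ t, Measurable (X t))
    (hmom : ∀ t : ℝ, 0 ≤ t → ∀ p : ℝ, 0 < p → Integrable (fun ω => |X t ω| ^ p) μ)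
    (hcov : ∀ s t : ℝ, 0 ≤ s → 0 ≤ t → ∫ ω, X t ω * X s ω ∂μ = min t s)
    {a b : ℝ → ℝ → ℝ → ℝ}
    (hLR : ∀ s t u : ℝ, 0 ≤ s → s < t → t < u →
      μ[X t | sigmaLE X s ⊔ sigmaGE X u] =ᵐ[μ]
        fun ω => a s t u * X s ω + b s t u * X u ω)
    {s t : ℝ} (hs : 0 < s) (hst : s < t) {k : ℕ} (hk : k ≤ 3) :
    ∫ ω, X s ω ^ k * X t ω ∂μ = ∫ ω, X s ω ^ (k + 1) ∂μ := by
  have hD0 : 0 ≤ ((∫ ω, X s ω ^ (2 * k) ∂μ) + 1) / 2 := by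
    have : 0 ≤ ∫ ω, X s ω ^ (2 * k) ∂μ :=
      integral_nonneg fun ω => by rw [mul_comm, pow_mul]; positivity
    linarith
  refine affine_forward (ψ := fun u => ∫ ω, X s ω ^ k * X u ω ∂μ) hs.le hst ?_ hD0 ?_
  · intro u htu
    obtain ⟨ha, hb⟩ := ab_spec hmeas hmom hcov hLR hs hst htu
    have hu : 0 ≤ u := le_trans (le_trans hs.le hst.le) htu.le
    have mw : Measurable[sigmaLE X s ⊔ sigmaGE X u] (fun ω => X s ω ^ k) :=
      ((measurable_sigmaLE hs.le le_rfl).pow_const k).mono le_sup_left le_rfl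
    have e := useLR hmeas hmom hLR hs.le hst htu (fun ω => X s ω ^ k) mw
      (by simpa using int_monomial hmeas hmom hs.le (le_trans hs.le hst.le) k 1 (by omega))
      (by simpa using int_monomial hmeas hmom hs.le hs.le k 1 (by omega))
      (by simpa using int_monomial hmeas hmom hs.le hu k 1 (by omega))
    have em : ∫ ω, X s ω ^ k * X s ω ∂μ = ∫ ω, X s ω ^ (k + 1) ∂μ :=
      ieq fun ω => by rw [pow_succ]
    rw [ha, hb, em] at e
    have hne : u - s ≠ 0 := by
      have : s < u := lt_trans hst htu
      intro h; nlinarith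
    have H : (u - s) * (∫ ω, X s ω ^ k * X t ω ∂μ)
        = (u - t) * (∫ ω, X s ω ^ (k + 1) ∂μ)
          + (t - s) * ∫ ω, X s ω ^ k * X u ω ∂μ := by
      rw [e]; field_simp
    exact H
  · intro u htu
    have hu : 0 < u := lt_trans (lt_trans hs hst) htu
    have H : |∫ ω, X s ω ^ k * X u ω ∂μ|
        ≤ ((∫ ω, X s ω ^ (2 * k) ∂μ) + 1) / 2 * Real.sqrt u :=
      growth_bound hmeas hmom hcov hs.le hu hk
    exact H

lemma bwd (hmeas : ∀ t, Measurable (X t))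
    (hmom : ∀ t : ℝ, 0 ≤ t → ∀ p : ℝ, 0 < p → Integrable (fun ω => |X t ω| ^ p) μ)
    (hcov : ∀ s t : ℝ, 0 ≤ s → 0 ≤ t → ∫ ω, X t ω * X s ω ∂μ = min t s)
    {a b : ℝ → ℝ → ℝ → ℝ}
    (hLR : ∀ s t u : ℝ, 0 ≤ s → s < t → t < u →
      μ[X t | sigmaLE X s ⊔ sigmaGE X u] =ᵐ[μ]
        fun ω => a s t u * X s ω + b s t u * X u ω)
    {t u : ℝ} (ht : 0 < t) (htu : t < u) {k : ℕ} (hk : k ≤ 3) :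
    u * ∫ ω, X u ω ^ k * X t ω ∂μ = t * ∫ ω, X u ω ^ (k + 1) ∂μ := by
  have hu : 0 ≤ u := le_trans ht.le htu.le
  have hD0 : 0 ≤ ((∫ ω, X u ω ^ (2 * k) ∂μ) + 1) / 2 := by
    have : 0 ≤ ∫ ω, X u ω ^ (2 * k) ∂μ :=
      integral_nonneg fun ω => by rw [mul_comm, pow_mul]; positivity
    linarith
  refine affine_backward (ψ := fun s => ∫ ω, X u ω ^ k * X s ω ∂μ) ht htu ?_ hD0 ?_
  · intro s hs0 hst
    obtain ⟨ha, hb⟩ := ab_spec hmeas hmom hcov hLR hs0 hst htu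
    have mw : Measurable[sigmaLE X s ⊔ sigmaGE X u] (fun ω => X u ω ^ k) :=
      ((measurable_sigmaGE le_rfl).pow_const k).mono le_sup_right le_rfl
    have e := useLR hmeas hmom hLR hs0.le hst htu (fun ω => X u ω ^ k) mw
      (by simpa using int_monomial hmeas hmom hu ht.le k 1 (by omega))
      (by simpa using int_monomial hmeas hmom hu hs0.le k 1 (by omega))
      (by simpa using int_monomial hmeas hmom hu hu k 1 (by omega))
    have em : ∫ ω, X u ω ^ k * X u ω ∂μ = ∫ ω, X u ω ^ (k + 1) ∂μ :=
      ieq fun ω => by rw [pow_succ]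
    rw [ha, hb, em] at e
    have hne : u - s ≠ 0 := by
      have : s < u := lt_trans hst htu
      intro h; nlinarith
    have H : (u - s) * (∫ ω, X u ω ^ k * X t ω ∂μ)
        = (u - t) * (∫ ω, X u ω ^ k * X s ω ∂μ)
          + (t - s) * ∫ ω, X u ω ^ (k + 1) ∂μ := by
      rw [e]; field_simp
    exact H
  · intro s hs0 hst
    have H : |∫ ω, X u ω ^ k * X s ω ∂μ|
        ≤ ((∫ ω, X u ω ^ (2 * k) ∂μ) + 1) / 2 * Real.sqrt s :=
      growth_bound hmeas hmom hcov hu hs0 hk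
    exact H

lemma integral_comb5 {Ω : Type*} [m0 : MeasurableSpace Ω] {μ : Measure Ω}
    {f1 f2 f3 f4 f5 : Ω → ℝ} (c1 c2 c3 c4 c5 : ℝ)
    (h1 : Integrable f1 μ) (h2 : Integrable f2 μ) (h3 : Integrable f3 μ)
    (h4 : Integrable f4 μ) (h5 : Integrable f5 μ) :
    ∫ ω, (c1 * f1 ω + c2 * f2 ω + c3 * f3 ω + c4 * f4 ω + c5 * f5 ω) ∂μ
      = c1 * (∫ ω, f1 ω ∂μ) + c2 * (∫ ω, f2 ω ∂μ) + c3 * (∫ ω, f3 ω ∂μ)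
        + c4 * (∫ ω, f4 ω ∂μ) + c5 * (∫ ω, f5 ω ∂μ) := by
  have i1 : Integrable (fun ω => c1 * f1 ω) μ := h1.const_mul _
  have i2 : Integrable (fun ω => c2 * f2 ω) μ := h2.const_mul _
  have i3 : Integrable (fun ω => c3 * f3 ω) μ := h3.const_mul _
  have i4 : Integrable (fun ω => c4 * f4 ω) μ := h4.const_mul _
  have i5 : Integrable (fun ω => c5 * f5 ω) μ := h5.const_mul _
  have i12 : Integrable (fun ω => c1 * f1 ω + c2 * f2 ω) μ := i1.add i2
  have i123 : Integrable (fun ω => c1 * f1 ω + c2 * f2 ω + c3 * f3 ω) μ := i12.add i3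
  have i1234 : Integrable (fun ω => c1 * f1 ω + c2 * f2 ω + c3 * f3 ω + c4 * f4 ω) μ :=
    i123.add i4
  rw [integral_add i1234 i5, integral_add i123 i4, integral_add i12 i3, integral_add i1 i2,
    integral_const_mul, integral_const_mul, integral_const_mul, integral_const_mul,
    integral_const_mul]

end Transport

theorem stmt6 {Ω : Type*} [MeasurableSpace Ω] (μ : Measure Ω) [IsProbabilityMeasure μ]
    (X : ℝ → Ω → ℝ) (hmeas : ∀ t, Measurable (X t))
    (hX0 : ∀ ω, X 0 ω = 0)
    (hmom : ∀ t : ℝ, 0 ≤ t → ∀ p : ℝ, 0 < p → Integrable (fun ω => |X t ω| ^ p) μ)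
    (hmean : ∀ t : ℝ, 0 ≤ t → ∫ ω, X t ω ∂μ = 0)
    (hcov : ∀ s t : ℝ, 0 ≤ s → 0 ≤ t → ∫ ω, X t ω * X s ω ∂μ = min t s)
    (a b : ℝ → ℝ → ℝ → ℝ)
    (hLR : ∀ s t u : ℝ, 0 ≤ s → s < t → t < u →
      μ[X t | sigmaLE X s ⊔ sigmaGE X u] =ᵐ[μ]
        fun ω => a s t u * X s ω + b s t u * X u ω)
    (hCV : ∀ s t : ℝ, 0 ≤ s → s ≤ t →
      μ[fun ω => (X t ω) ^ 2 | sigmaLE X s] =ᵐ[μ] fun ω => (X s ω) ^ 2 + t - s)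
    (hindep : ∀ t : ℝ, 0 < t → LinIndep123 μ (X t))
    (θ τ : ℝ) (hτ : 0 ≤ τ)
    (hfut : ∀ s t : ℝ, 0 < s → s < t →
      μ[fun ω => (X s ω) ^ 2 | sigmaGE X t] =ᵐ[μ]
        fun ω => s * (s + τ) / (t * (t + τ)) * (X t ω) ^ 2 +
          s * (t - s) * θ / (t * (t + τ)) * X t ω + s * (t - s) / (t + τ)) :
    (∀ t : ℝ, 0 ≤ t → ∫ ω, (X t ω) ^ 3 ∂μ = t * θ) ∧
    ∃ q : ℝ, -1 < q ∧ q ≤ 1 ∧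
      ∀ s t : ℝ, 0 ≤ s → s < t →
        (∫ ω, (X t ω) ^ 4 ∂μ = (1 + q) * t * (t + τ) + t * (t + θ ^ 2)) ∧
        (∫ ω, (X t ω - X s ω) ^ 2 ∂μ = t - s) ∧
        (∫ ω, (X t ω - X s ω) ^ 3 ∂μ = θ * (t - s)) ∧
        (∫ ω, (X t ω - X s ω) ^ 4 ∂μ =
          (t - s) * (6 * s + θ ^ 2 - τ + (2 + q) * (t + τ - 3 * s))) := by
  have h1τ : (0:ℝ) < 1 + τ := by linarith
  have hsqm : ∀ t : ℝ, 0 ≤ t → ∫ ω, X t ω ^ 2 ∂μ = t := fun t ht => mom_sq hcov ht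
  have hmean1 : ∀ t : ℝ, 0 ≤ t → ∫ ω, X t ω ^ 1 ∂μ = 0 := by
    intro t ht
    rw [← hmean t ht]
    exact ieq fun ω => pow_one _
  -- (CV)-based identities
  have hE2 : ∀ s t : ℝ, 0 ≤ s → s ≤ t →
      ∫ ω, X s ω * X t ω ^ 2 ∂μ = ∫ ω, X s ω ^ 3 ∂μ := by
    intro s t hs hst
    have h := useCV hmeas hmom hmean hCV hs hst (k := 1) (by norm_num)
    rw [hmean1 s hs] at h
    norm_num at h
    exact h
  have hQ : ∀ s t : ℝ, 0 ≤ s → s ≤ t →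
      ∫ ω, X s ω ^ 2 * X t ω ^ 2 ∂μ = (∫ ω, X s ω ^ 4 ∂μ) + (t - s) * s := by
    intro s t hs hst
    have h := useCV hmeas hmom hmean hCV hs hst (k := 2) (by norm_num)
    rw [hsqm s hs] at h
    norm_num at h
    exact h
  -- (LR)-based transport
  have hG2 : ∀ s t : ℝ, 0 < s → s < t →
      ∫ ω, X s ω ^ 2 * X t ω ∂μ = ∫ ω, X s ω ^ 3 ∂μ := by
    intro s t hs hst
    have h := fwd hmeas hmom hcov hLR hs hst (k := 2) (by norm_num)
    norm_num at h
    exact h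
  have hM : ∀ s t : ℝ, 0 < s → s < t →
      ∫ ω, X s ω ^ 3 * X t ω ∂μ = ∫ ω, X s ω ^ 4 ∂μ := by
    intro s t hs hst
    have h := fwd hmeas hmom hcov hLR hs hst (k := 3) (by norm_num)
    norm_num at h
    exact h
  have hN : ∀ s t : ℝ, 0 < s → s < t →
      t * ∫ ω, X t ω ^ 3 * X s ω ∂μ = s * ∫ ω, X t ω ^ 4 ∂μ := by
    intro s t hs hst
    have h := bwd hmeas hmom hcov hLR hs hst (k := 3) (by norm_num)
    norm_num at h
    exact h
  have hB2 : ∀ s t : ℝ, 0 < s → s < t →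
      t * ∫ ω, X t ω ^ 2 * X s ω ∂μ = s * ∫ ω, X t ω ^ 3 ∂μ := by
    intro s t hs hst
    have h := bwd hmeas hmom hcov hLR hs hst (k := 2) (by norm_num)
    norm_num at h
    exact h
  -- third moment is linear
  have hm3lin : ∀ s t : ℝ, 0 < s → s < t →
      t * ∫ ω, X s ω ^ 3 ∂μ = s * ∫ ω, X t ω ^ 3 ∂μ := by
    intro s t hs hst
    have h1 := hB2 s t hs hst
    have hc : ∫ ω, X t ω ^ 2 * X s ω ∂μ = ∫ ω, X s ω * X t ω ^ 2 ∂μ :=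
      ieq fun ω => by ring
    rw [hc, hE2 s t hs.le hst.le] at h1
    exact h1
  have hm3 : ∀ t : ℝ, 0 < t → ∫ ω, X t ω ^ 3 ∂μ = (∫ ω, X 1 ω ^ 3 ∂μ) * t := by
    intro t ht
    rcases lt_trichotomy t 1 with h | h | h
    · have := hm3lin t 1 ht h
      linarith
    · rw [h]; ring
    · have := hm3lin 1 t one_pos h
      linarith
  have hθeq : ∫ ω, X 1 ω ^ 3 ∂μ = θ := by
    have h2τ : (0:ℝ) < 2 + τ := by linarith
    have h := useFut hmeas hmom hfut (s := 1) (t := 2) one_pos one_lt_two (k := 1)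
      (by norm_num)
    norm_num at h
    rw [hsqm 2 (by norm_num), hm3 2 (by norm_num)] at h
    have hc : ∫ ω, X 2 ω * X 1 ω ^ 2 ∂μ = ∫ ω, X 1 ω ^ 2 * X 2 ω ∂μ :=
      ieq fun ω => by ring
    rw [hc, hG2 1 2 one_pos one_lt_two, hmean 2 (by norm_num)] at h
    field_simp at h
    linarith
  have hm3' : ∀ t : ℝ, 0 < t → ∫ ω, X t ω ^ 3 ∂μ = θ * t := by
    intro t ht
    rw [hm3 t ht, hθeq]
  clear hm3
  -- fourth moment
  set q : ℝ := ((∫ ω, X 1 ω ^ 4 ∂μ) - 1 - θ ^ 2) / (1 + τ) - 1 with hqdef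
  have hq1 : (1 + q) * (1 + τ) = (∫ ω, X 1 ω ^ 4 ∂μ) - 1 - θ ^ 2 := by
    rw [hqdef]
    field_simp
    ring
  have hHrel : ∀ s t : ℝ, 0 < s → s < t →
      ((∫ ω, X s ω ^ 4 ∂μ) + (t - s) * s) * (t * (t + τ))
        = s * (s + τ) * (∫ ω, X t ω ^ 4 ∂μ) + s * (t - s) * θ * (θ * t)
          + s * (t - s) * t * t := by
    intro s t hs hst
    have ht : 0 < t := hs.trans hst
    have htτ : (0:ℝ) < t + τ := by linarith
    have h6 := useFut hmeas hmom hfut hs hst (k := 2) (le_refl 2)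
    norm_num at h6
    rw [hsqm t ht.le, hm3' t ht] at h6
    have hc : ∫ ω, X t ω ^ 2 * X s ω ^ 2 ∂μ = ∫ ω, X s ω ^ 2 * X t ω ^ 2 ∂μ :=
      ieq fun ω => by ring
    rw [hc, hQ s t hs.le hst.le] at h6
    field_simp at h6
    apply mul_right_cancel₀ (ne_of_gt htτ)
    linear_combination (t + τ) * h6
  have hm4 : ∀ t : ℝ, 0 < t →
      ∫ ω, X t ω ^ 4 ∂μ = (1 + q) * t * (t + τ) + t ^ 2 + t * θ ^ 2 := by
    intro t ht
    have htτ : (0:ℝ) < t + τ := by linarith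
    have hm41 : ∫ ω, X 1 ω ^ 4 ∂μ = (1 + q) * (1 + τ) + 1 + θ ^ 2 := by linarith
    rcases lt_trichotomy t 1 with h | h | h
    · have HC := hHrel t 1 ht h
      rw [hm41] at HC
      apply mul_left_cancel₀ (ne_of_gt h1τ)
      linear_combination HC
    · rw [h, hm41]; ring
    · have HC := hHrel 1 t one_pos h
      rw [hm41] at HC
      apply mul_left_cancel₀ (ne_of_gt h1τ)
      linear_combination -HC
    -- convenient integrability facts
  have iP : ∀ {c : ℝ}, 0 ≤ c → ∀ i : ℕ, i ≤ 8 → Integrable (fun ω => X c ω ^ i) μ := by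
    intro c hc i hi
    simpa using int_monomial hmeas hmom hc hc i 0 (by omega)
  have iOne : Integrable (fun _ : Ω => (1:ℝ)) μ := integrable_const 1
  -- q > -1
  have h01 : (0:ℝ) ≤ 1 := zero_le_one
  have hY2val : ∫ ω, (X 1 ω ^ 2 - θ * X 1 ω - 1) ^ 2 ∂μ = (1 + q) * (1 + τ) := by
    have e0 : (fun ω => (X 1 ω ^ 2 - θ * X 1 ω - 1) ^ 2)
        = fun ω => 1 * X 1 ω ^ 4 + (-(2*θ)) * X 1 ω ^ 3 + (θ^2 - 2) * X 1 ω ^ 2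
            + (2*θ) * X 1 ω + 1 * 1 := funext fun ω => by ring
    rw [congrArg (integral μ) e0,
      integral_comb5 _ _ _ _ _ (iP h01 4 (by norm_num)) (iP h01 3 (by norm_num))
        (iP h01 2 (by norm_num)) (by simpa using iP h01 1 (by norm_num)) iOne]
    rw [hm3' 1 one_pos, hsqm 1 h01, hmean 1 h01]
    simp only [integral_const, measure_univ, ENNReal.toReal_one, probReal_univ, smul_eq_mul, mul_one]
    linarith [hq1]
  have hiY : Integrable (fun ω => (X 1 ω ^ 2 - θ * X 1 ω - 1) ^ 2) μ := by
    have e0 : (fun ω => (X 1 ω ^ 2 - θ * X 1 ω - 1) ^ 2)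
        = fun ω => 1 * X 1 ω ^ 4 + (-(2*θ)) * X 1 ω ^ 3 + (θ^2 - 2) * X 1 ω ^ 2
            + (2*θ) * X 1 ω + 1 * 1 := funext fun ω => by ring
    rw [e0]
    have j1 : Integrable (fun ω => 1 * X 1 ω ^ 4) μ := (iP h01 4 (by norm_num)).const_mul _
    have j2 : Integrable (fun ω => -(2*θ) * X 1 ω ^ 3) μ := (iP h01 3 (by norm_num)).const_mul _
    have j3 : Integrable (fun ω => (θ^2 - 2) * X 1 ω ^ 2) μ := (iP h01 2 (by norm_num)).const_mul _
    have j4 : Integrable (fun ω => (2*θ) * X 1 ω) μ :=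
      ((by simpa using iP h01 1 (by norm_num) : Integrable (fun ω => X 1 ω) μ)).const_mul _
    have j5 : Integrable (fun _ : Ω => 1 * (1:ℝ)) μ := integrable_const _
    exact (((j1.add j2).add j3).add j4).add j5
  have hqgt : -1 < q := by
    by_contra hcon
    push_neg at hcon
    have h0 : ∫ ω, (X 1 ω ^ 2 - θ * X 1 ω - 1) ^ 2 ∂μ ≤ 0 := by
      rw [hY2val]; nlinarith
    have hz : ∫ ω, (X 1 ω ^ 2 - θ * X 1 ω - 1) ^ 2 ∂μ = 0 :=
      le_antisymm h0 (integral_nonneg fun ω => sq_nonneg _)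
    have hae := (integral_eq_zero_iff_of_nonneg (fun ω => sq_nonneg _) hiY).mp hz
    have hae2 : (fun ω => (-1 : ℝ) + (-θ) * X 1 ω + 1 * (X 1 ω) ^ 2) =ᵐ[μ] (fun _ => 0) := by
      filter_upwards [hae] with ω h
      have h' : (X 1 ω ^ 2 - θ * X 1 ω - 1) ^ 2 = 0 := h
      have h'' := (pow_eq_zero_iff two_ne_zero).mp h'
      linear_combination h''
    obtain ⟨h₀, -, -⟩ := hindep 1 one_pos (-1) (-θ) 1 hae2
    norm_num at h₀
  -- q ≤ 1
  have hVkey : ∀ s t : ℝ, 0 < s → s < t →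
      0 ≤ t * ((t - s) * (θ^2 + (1+q)*τ + (2+q)*t - s*(1+q+q^2))) := by
    intro s t hs hst
    have ht : 0 < t := hs.trans hst
    have hpos : 0 ≤ ∫ ω, ((1+q)*(X s ω * X t ω - X s ω^2) - (X t ω^2 - X s ω^2))^2 ∂μ :=
      integral_nonneg fun ω => sq_nonneg _
    have hexp : ∫ ω, ((1+q)*(X s ω * X t ω - X s ω^2) - (X t ω^2 - X s ω^2))^2 ∂μ
        = q^2 * (∫ ω, X s ω^4 ∂μ) + (-2*(1+q)*q) * (∫ ω, X s ω^3 * X t ω ∂μ)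
          + ((1+q)^2 + 2*q) * (∫ ω, X s ω^2 * X t ω^2 ∂μ)
          + (-2*(1+q)) * (∫ ω, X t ω^3 * X s ω ∂μ) + 1 * (∫ ω, X t ω^4 ∂μ) := by
      have e0 : (fun ω => ((1+q)*(X s ω * X t ω - X s ω^2) - (X t ω^2 - X s ω^2))^2)
          = fun ω => q^2 * (X s ω^4) + (-2*(1+q)*q) * (X s ω^3 * X t ω)
            + ((1+q)^2 + 2*q) * (X s ω^2 * X t ω^2)
            + (-2*(1+q)) * (X t ω^3 * X s ω) + 1 * (X t ω^4) := funext fun ω => by ring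
      rw [congrArg (integral μ) e0,
        integral_comb5 _ _ _ _ _ (iP hs.le 4 (by norm_num))
          (by simpa using int_monomial hmeas hmom hs.le ht.le 3 1 (by norm_num))
          (int_monomial hmeas hmom hs.le ht.le 2 2 (by norm_num))
          (by simpa using int_monomial hmeas hmom ht.le hs.le 3 1 (by norm_num))
          (iP ht.le 4 (by norm_num))]
    rw [hM s t hs hst, hQ s t hs.le hst.le, hm4 s hs, hm4 t ht] at hexp
    have hNt := hN s t hs hst
    rw [hm4 t ht] at hNt
    have hval : t * ∫ ω, ((1+q)*(X s ω * X t ω - X s ω^2) - (X t ω^2 - X s ω^2))^2 ∂μ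
        = t * ((t - s) * (θ^2 + (1+q)*τ + (2+q)*t - s*(1+q+q^2))) := by
      linear_combination t * hexp + (-2*(1+q)) * hNt
    calc (0:ℝ) = t * 0 := by ring
      _ ≤ t * ∫ ω, ((1+q)*(X s ω * X t ω - X s ω^2) - (X t ω^2 - X s ω^2))^2 ∂μ := by
          apply mul_le_mul_of_nonneg_left hpos ht.le
      _ = _ := hval
  have hqle : q ≤ 1 := by
    by_contra hcon
    push_neg at hcon
    have hq2 : 0 < q^2 - 1 := by nlinarith
    have hA0 : 0 < θ^2 + (1+q)*τ + 2 + q + 1 := by nlinarith [sq_nonneg θ]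
    set s0 : ℝ := (θ^2 + (1+q)*τ + 2 + q + 1) / (q^2 - 1) with hs0def
    have hs0 : 0 < s0 := div_pos hA0 hq2
    have hs0q : s0 * (q^2 - 1) = θ^2 + (1+q)*τ + 2 + q + 1 := by
      rw [hs0def]; field_simp
    have h := hVkey s0 (s0 + 1) hs0 (by linarith)
    have hexpr : θ^2 + (1+q)*τ + (2+q)*(s0+1) - s0*(1+q+q^2) = -1 := by linarith
    rw [hexpr] at h
    nlinarith
  refine ⟨?_, q, hqgt, hqle, ?_⟩
  · intro t ht
    rcases eq_or_lt_of_le ht with h | h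
    · have e0 : (fun ω => X t ω ^ 3) = fun _ : Ω => (0:ℝ) := funext fun ω => by
        rw [← h, hX0]; ring
      rw [congrArg (integral μ) e0, integral_zero, ← h]
      ring
    · rw [hm3' t h]; ring
  · intro s t hs hst
    have ht : 0 < t := lt_of_le_of_lt hs hst
    have g1 : ∫ ω, X t ω ^ 4 ∂μ = (1 + q) * t * (t + τ) + t * (t + θ ^ 2) := by
      rw [hm4 t ht]; ring
    rcases eq_or_lt_of_le hs with h | h
    · -- s = 0
      refine ⟨g1, ?_, ?_, ?_⟩
      · have e0 : (fun ω => (X t ω - X s ω)^2) = fun ω => X t ω ^ 2 := funext fun ω => by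
          rw [← h, hX0]; ring
        rw [congrArg (integral μ) e0, hsqm t ht.le, ← h, sub_zero]
      · have e0 : (fun ω => (X t ω - X s ω)^3) = fun ω => X t ω ^ 3 := funext fun ω => by
          rw [← h, hX0]; ring
        rw [congrArg (integral μ) e0, hm3' t ht, ← h]
        ring
      · have e0 : (fun ω => (X t ω - X s ω)^4) = fun ω => X t ω ^ 4 := funext fun ω => by
          rw [← h, hX0]; ring
        rw [congrArg (integral μ) e0, hm4 t ht, ← h]
        ring
    · -- 0 < s
      refine ⟨g1, ?_, ?_, ?_⟩
      · have e0 : (fun ω => (X t ω - X s ω)^2)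
            = fun ω => 1 * X t ω ^ 2 + (-2) * (X t ω * X s ω) + 1 * X s ω ^ 2
              + 0 * 1 + 0 * 1 := funext fun ω => by ring
        rw [congrArg (integral μ) e0,
          integral_comb5 _ _ _ _ _ (iP ht.le 2 (by norm_num))
            (by simpa using int_monomial hmeas hmom ht.le h.le 1 1 (by norm_num))
            (iP h.le 2 (by norm_num)) iOne iOne,
          hsqm t ht.le, hsqm s h.le, hcov s t h.le ht.le, min_eq_right hst.le]
        ring
      · have e0 : (fun ω => (X t ω - X s ω)^3)
            = fun ω => 1 * X t ω ^ 3 + (-3) * (X s ω * X t ω ^ 2)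
              + 3 * (X s ω ^ 2 * X t ω) + (-1) * X s ω ^ 3 + 0 * 1 :=
          funext fun ω => by ring
        rw [congrArg (integral μ) e0,
          integral_comb5 _ _ _ _ _ (iP ht.le 3 (by norm_num))
            (by simpa using int_monomial hmeas hmom h.le ht.le 1 2 (by norm_num))
            (by simpa using int_monomial hmeas hmom h.le ht.le 2 1 (by norm_num))
            (iP h.le 3 (by norm_num)) iOne,
          hm3' t ht, hE2 s t h.le hst.le, hG2 s t h hst, hm3' s h]
        ring
      · have e0 : (fun ω => (X t ω - X s ω)^4)
            = fun ω => 1 * X t ω ^ 4 + (-4) * (X t ω ^ 3 * X s ω)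
              + 6 * (X s ω ^ 2 * X t ω ^ 2) + (-4) * (X s ω ^ 3 * X t ω) + 1 * X s ω ^ 4 :=
          funext fun ω => by ring
        have e : ∫ ω, (X t ω - X s ω)^4 ∂μ
            = 1 * (∫ ω, X t ω ^ 4 ∂μ) + (-4) * (∫ ω, X t ω ^ 3 * X s ω ∂μ)
              + 6 * (∫ ω, X s ω ^ 2 * X t ω ^ 2 ∂μ)
              + (-4) * (∫ ω, X s ω ^ 3 * X t ω ∂μ) + 1 * (∫ ω, X s ω ^ 4 ∂μ) := by
          rw [congrArg (integral μ) e0,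
            integral_comb5 _ _ _ _ _ (iP ht.le 4 (by norm_num))
              (by simpa using int_monomial hmeas hmom ht.le h.le 3 1 (by norm_num))
              (int_monomial hmeas hmom h.le ht.le 2 2 (by norm_num))
              (by simpa using int_monomial hmeas hmom h.le ht.le 3 1 (by norm_num))
              (iP h.le 4 (by norm_num))]
        rw [hQ s t h.le hst.le, hM s t h hst, hm4 s h, hm4 t ht] at e
        have hNt := hN s t h hst
        rw [hm4 t ht] at hNt
        apply mul_left_cancel₀ (ne_of_gt ht)
        linear_combination t * e - 4 * hNt
end
end

section
/- Let 0 ≤ s < t < u be reals, θ ∈ ℝ, τ ≥ 0, and q ∈ ℝ with u + τ − q s ≠ 0. Define A = ((u−t)/(u−s))·((u+τ−qt)/(u+τ−qs)), B = (1+q)·((t−s)/(u−s))·((u−t)/(u+τ−qs)), C = ((t−s)/(u−s))·((t+τ−qs)/(u+τ−qs)), D = (u−t)(t−s)/(u+τ−qs), α = −θ(u−t)(t−s)/((u−s)(u+τ−qs)), β = θ(u−t)(t−s)/((u−s)(u+τ−qs)). Then these quantities satisfy: t − A s − C u = B s + D; A + B + C = 1; A s² + B s u + C u² − t² = τ D;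 s α + u β = θ D; α + β = 0; and (u−s) B = (1+q) D. -/
theorem stmt7 (s t u θ τ q : ℝ) (hs : 0 ≤ s) (hst : s < t) (htu : t < u)
    (hτ : 0 ≤ τ) (hne : u + τ - q * s ≠ 0) :
    let A := ((u - t)/(u - s)) * ((u + τ - q*t)/(u + τ - q*s))
    let B := (1 + q) * ((t - s)/(u - s)) * ((u - t)/(u + τ - q*s))
    let C := ((t - s)/(u - s)) * ((t + τ - q*s)/(u + τ - q*s))
    let D := (u - t)*(t - s)/(u + τ - q*s)
    let α := -θ*(u - t)*(t - s)/((u - s)*(u + τ - q*s))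
    let β := θ*(u - t)*(t - s)/((u - s)*(u + τ - q*s))
    t - A*s - C*u = B*s + D ∧
    A + B + C = 1 ∧
    A*s^2 + B*s*u + C*u^2 - t^2 = τ*D ∧
    s*α + u*β = θ*D ∧
    α + β = 0 ∧
    (u - s)*B = (1 + q)*D := by
  intro A B C D α β
  have hus : u - s ≠ 0 := by nlinarith
  have hne' : u + τ - s * q ≠ 0 := by rwa [mul_comm s q]
  refine ⟨?_, ?_, ?_, ?_, ?_, ?_⟩ <;>
    simp only [A, B, C, D, α, β] <;> field_simp <;> ring
end

section
/- Let 0 ≤ s < t, τ ≥ 0 and −1 ≤ q ≤ 1. Then the series with nonnegative extended-real terms ∑_{n=1}^∞ 1/√( (t − s q^{n−1} + τ[n−1]_q)·[n]_q ) diverges (its sum is +∞), where [n]_q = 1 + q + ⋯ + q^{n−1} with [0]_q = 0, and terms with zero denominator are interpreted as +∞. -/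
noncomputable section

/-- The q-integer `[n]_q = 1 + q + ⋯ + q^(n-1)`, with `[0]_q = 0`. -/
def qInt (q : ℝ) (n : ℕ) : ℝ := ∑ i ∈ Finset.range n, q ^ i

lemma pow_abs_le {q : ℝ} (hq1 : -1 ≤ q) (hq2 : q ≤ 1) (n : ℕ) : |q ^ n| ≤ 1 := by
  rw [abs_pow]
  exact pow_le_one₀ (abs_nonneg q) (abs_le.mpr ⟨hq1, hq2⟩)

lemma qInt_nonneg {q : ℝ} (hq1 : -1 ≤ q) (hq2 : q ≤ 1) (n : ℕ) : 0 ≤ qInt q n := by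
  rcases eq_or_lt_of_le hq2 with h | h
  · subst h; simp [qInt]
  · have hgs : qInt q n * (q - 1) = q ^ n - 1 := geom_sum_mul q n
    have hqn : q ^ n ≤ 1 := le_trans (le_abs_self _) (pow_abs_le hq1 hq2 n)
    nlinarith

lemma qInt_le {q : ℝ} (hq1 : -1 ≤ q) (hq2 : q ≤ 1) (n : ℕ) : qInt q n ≤ n := by
  have h : ∀ i ∈ Finset.range n, q ^ i ≤ 1 := fun i _ =>
    le_trans (le_abs_self _) (pow_abs_le hq1 hq2 i)
  have := Finset.sum_le_sum h
  simpa [qInt] using this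

lemma harmonic_ennreal : ∑' n : ℕ, (ENNReal.ofReal ((n:ℝ)+1))⁻¹ = ⊤ := by
  by_contra h
  have hsum := ENNReal.summable_toReal h
  have h1 : Summable (fun n : ℕ => ((n:ℝ)+1)⁻¹) := by
    convert hsum using 2 with n
    rw [ENNReal.toReal_inv, ENNReal.toReal_ofReal (by positivity)]
  have h2 : Summable (fun n : ℕ => ((n:ℝ))⁻¹) := by
    rw [← summable_nat_add_iff 1]
    convert h1 using 2 with n
    · rfl
    · push_cast; ring
  exact Real.not_summable_natCast_inv h2

theorem stmt8 (s t τ q : ℝ) (hs : 0 ≤ s) (hst : s < t) (hτ : 0 ≤ τ)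
    (hq1 : -1 ≤ q) (hq2 : q ≤ 1) :
    (∑' n : ℕ,
      (1 : ENNReal) /
        ENNReal.ofReal (Real.sqrt ((t - s * q ^ n + τ * qInt q n) * qInt q (n + 1)))) = ⊤ := by
  set C := t + s + τ with hC
  have hCpos : 0 < C := by nlinarith
  have hbound : ∀ n : ℕ,
      (t - s * q ^ n + τ * qInt q n) * qInt q (n + 1) ≤ C * ((n:ℝ)+1) * ((n:ℝ)+1) := by
    intro n
    have h1 : 0 ≤ qInt q (n+1) := qInt_nonneg hq1 hq2 (n+1)
    have h2 : qInt q (n+1) ≤ (n:ℝ)+1 := by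
      have := qInt_le hq1 hq2 (n+1); push_cast at this; linarith
    have h3 : qInt q n ≤ (n:ℝ) := qInt_le hq1 hq2 n
    have hqa := abs_le.mp (pow_abs_le hq1 hq2 n)
    have h4 : t - s * q ^ n + τ * qInt q n ≤ C * ((n:ℝ)+1) := by
      have hn : (0:ℝ) ≤ n := Nat.cast_nonneg n
      nlinarith [hqa.1, hqa.2]
    have h5 : 0 ≤ C * ((n:ℝ)+1) := by positivity
    exact mul_le_mul h4 h2 h1 h5
  have hsqrt : ∀ n : ℕ,
      Real.sqrt ((t - s * q ^ n + τ * qInt q n) * qInt q (n + 1))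
        ≤ Real.sqrt C * ((n:ℝ)+1) := by
    intro n
    have h1 : Real.sqrt (C * ((n:ℝ)+1) * ((n:ℝ)+1)) = Real.sqrt C * ((n:ℝ)+1) := by
      rw [mul_assoc, Real.sqrt_mul hCpos.le, Real.sqrt_mul_self (by positivity)]
    rw [← h1]
    exact Real.sqrt_le_sqrt (hbound n)
  have hterm : ∀ n : ℕ,
      (ENNReal.ofReal (Real.sqrt C * ((n:ℝ)+1)))⁻¹ ≤
        (1 : ENNReal) /
          ENNReal.ofReal (Real.sqrt ((t - s * q ^ n + τ * qInt q n) * qInt q (n + 1))) := by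
    intro n
    rw [one_div]
    exact ENNReal.inv_le_inv' (ENNReal.ofReal_le_ofReal (hsqrt n))
  have hrw : ∀ n : ℕ, (ENNReal.ofReal (Real.sqrt C * ((n:ℝ)+1)))⁻¹ =
      (ENNReal.ofReal (Real.sqrt C))⁻¹ * (ENNReal.ofReal ((n:ℝ)+1))⁻¹ := by
    intro n
    rw [ENNReal.ofReal_mul (Real.sqrt_nonneg C), ENNReal.mul_inv] <;>
      simp [ENNReal.ofReal_ne_top]
  have hlow : ∑' n : ℕ, (ENNReal.ofReal (Real.sqrt C * ((n:ℝ)+1)))⁻¹ = ⊤ := by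
    rw [tsum_congr hrw, ENNReal.tsum_mul_left, harmonic_ennreal, ENNReal.mul_top]
    simp [Real.sqrt_pos.mpr hCpos, ENNReal.ofReal_ne_top, ENNReal.inv_ne_zero]
  rw [eq_top_iff, ← hlow]
  exact ENNReal.tsum_le_tsum hterm
end
end

section
/- (Proposition 3.2, Chapman–Kolmogorov step) Fix real parameters θ ∈ ℝ, τ ≥ 0, −1 ≤ q ≤ 1, reals 0 ≤ s < t < u and x ∈ ℝ. Suppose μ is a Borel probability measure on ℝ with finite moments of all orders such that ∫ Q_n(y|x,s,t) μ(dy) = 0 for all n ≥ 1, and suppose (κ_y)_{y∈ℝ} is a measurable family of Borel probability measures on ℝ such that ∫ Q_k(z|y,t,u) κ_y(dz) = 0 for all y ∈ ℝ and all k ≥ 1, and such that ∫∫ |y|^a |z|^b κ_y(dz) μ(dy) < ∞ for all a, b ∈ ℕ. Let ν be the probability measure ν(A) = ∫ κ_y(A) μ(dy). Then ∫ Q_n(z|x,s,u) ν(dz) = 0 for all n ≥ 1. -/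
noncomputable section

/-- The q-factorial `[n]_q! = [1]_q [2]_q ⋯ [n]_q`, with `[0]_q! = 1`. -/
def qFact (q : ℝ) : ℕ → ℝ
  | 0 => 1
  | n + 1 => qFact q n * qInt q (n + 1)

/-- The q-binomial coefficient `[n choose k]_q = [n]_q! / ([k]_q! [n-k]_q!)`. -/
def qBinom (q : ℝ) (n k : ℕ) : ℝ := qFact q n / (qFact q k * qFact q (n - k))

/-- The polynomials `Q_n(y | x, s, t)` defined by `Q₀ = 1`, `Q₁(y|x) = y - x` and, for `n ≥ 1`,
`y Q_n(y|x) = Q_{n+1}(y|x) + (θ[n]_q + x qⁿ) Q_n(y|x) + (t - s q^(n-1) + τ[n-1]_q)[n]_q Q_{n-1}(y|x)`. -/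
def Qpoly (θ τ q : ℝ) : ℕ → ℝ → ℝ → ℝ → ℝ → ℝ
  | 0, _, _, _, _ => 1
  | 1, y, x, _, _ => y - x
  | n + 2, y, x, s, t =>
      (y - (θ * qInt q (n + 1) + x * q ^ (n + 1))) * Qpoly θ τ q (n + 1) y x s t
        - (t - s * q ^ n + τ * qInt q n) * qInt q (n + 1) * Qpoly θ τ q n y x s t


/-- Gaussian binomial via q-Pascal recursion. -/
def gq (q : ℝ) : ℕ → ℕ → ℝ
  | _, 0 => 1
  | 0, _ + 1 => 0
  | n + 1, k + 1 => gq q n k + q ^ (k + 1) * gq q n (k + 1)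

lemma qInt_zero (q : ℝ) : qInt q 0 = 0 := by simp [qInt]
lemma qInt_one (q : ℝ) : qInt q 1 = 1 := by simp [qInt]
lemma qInt_succ (q : ℝ) (n : ℕ) : qInt q (n + 1) = qInt q n + q ^ n :=
  Finset.sum_range_succ _ _

lemma qInt_add (q : ℝ) (a b : ℕ) : qInt q (a + b) = qInt q a + q ^ a * qInt q b := by
  induction b with
  | zero => simp [qInt_zero]
  | succ b ih => rw [← Nat.add_assoc, qInt_succ, ih, qInt_succ, pow_add]; ring

lemma gq_k0 (q : ℝ) (n : ℕ) : gq q n 0 = 1 := by cases n <;> rfl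

lemma gq_zero (q : ℝ) : ∀ n k, n < k → gq q n k = 0 := by
  intro n
  induction n with
  | zero => intro k hk; match k, hk with | k+1, _ => rfl
  | succ n ih =>
    intro k hk
    match k, hk with
    | k+1, hk =>
      show gq q n k + q ^ (k+1) * gq q n (k+1) = 0
      rw [ih k (by omega), ih (k+1) (by omega)]; ring

/-- key identities: I1 and I2 and J -/
lemma gq_ids (q : ℝ) : ∀ n : ℕ,
    (∀ k, qInt q (n + 1 - k) * gq q (n + 1) k = qInt q (n + 1) * gq q n k) ∧
    (∀ k, qInt q (k + 1) * gq q (n + 1) (k + 1) = qInt q (n + 1) * gq q n k) := by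
  intro n
  induction n with
  | zero =>
    constructor
    · intro k
      match k with
      | 0 => simp [gq_k0]
      | 1 => show qInt q 0 * gq q 1 1 = qInt q 1 * gq q 0 1; simp [qInt_zero, gq]
      | k+2 => rw [gq_zero q 1 (k+2) (by omega), gq_zero q 0 (k+2) (by omega)]; ring
    · intro k
      match k with
      | 0 => show qInt q 1 * gq q 1 1 = qInt q 1 * gq q 0 0
             have : gq q 1 1 = gq q 0 0 + q^1 * gq q 0 1 := rfl
             simp [this, gq]
      | k+1 => rw [gq_zero q 1 (k+2) (by omega), gq_zero q 0 (k+1) (by omega)]; ring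
  | succ n ih =>
    have hJ : ∀ k, qInt q (n + 1 - k) * gq q (n + 1) k = qInt q (k + 1) * gq q (n + 1) (k + 1) :=
      fun k => (ih.1 k).trans (ih.2 k).symm
    constructor
    · -- I1 (n+1)
      intro k
      match k with
      | 0 => simp [gq_k0]
      | k+1 =>
        by_cases hk : k ≤ n
        · have hgq : gq q (n+2) (k+1) = gq q (n+1) k + q^(k+1) * gq q (n+1) (k+1) := rfl
          have hsub : n + 1 + 1 - (k + 1) = n + 1 - k := by omega
          have hEq : qInt q (n + 2) = qInt q (k + 1) + q ^ (k+1) * qInt q (n + 1 - k) := by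
            rw [← qInt_add]; congr 1; omega
          rw [hsub, hgq, hEq]
          linear_combination hJ k
        · have h1 : gq q (n+1) (k+1) = 0 := gq_zero _ _ _ (by omega)
          have h0 : n + 1 + 1 - (k+1) = 0 := by omega
          rw [h0, h1, qInt_zero]; ring
    · -- I2 (n+1)
      intro k
      by_cases hk : k ≤ n + 1
      · have hgq : gq q (n+2) (k+1) = gq q (n+1) k + q^(k+1) * gq q (n+1) (k+1) := rfl
        have hEq : qInt q (n + 2) = qInt q (k + 1) + q ^ (k+1) * qInt q (n + 1 - k) := by
          rw [← qInt_add]; congr 1; omega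
        rw [hgq, hEq]
        linear_combination (q^(k+1)) * (ih.2 k) - (q^(k+1)) * (ih.1 k)
      · rw [gq_zero q (n+1) k (by omega), gq_zero q (n+2) (k+1) (by omega)]; ring

/-- uniform three-term recurrence, valid for all m with ℕ-subtraction conventions. -/
lemma Qrec (θ τ q : ℝ) (m : ℕ) (v c S T : ℝ) :
    v * Qpoly θ τ q m v c S T
      = Qpoly θ τ q (m + 1) v c S T + (θ * qInt q m + c * q ^ m) * Qpoly θ τ q m v c S T
        + (T - S * q ^ (m - 1) + τ * qInt q (m - 1)) * qInt q m * Qpoly θ τ q (m - 1) v c S T := by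
  match m with
  | 0 => simp [Qpoly, qInt_zero]
  | 1 =>
    show v * (v - c) = ((v - (θ * qInt q 1 + c * q^1)) * Qpoly θ τ q 1 v c S T
        - (T - S * q^0 + τ * qInt q 0) * qInt q 1 * Qpoly θ τ q 0 v c S T)
      + (θ * qInt q 1 + c * q ^ 1) * (v - c)
      + (T - S * q ^ 0 + τ * qInt q 0) * qInt q 1 * Qpoly θ τ q 0 v c S T
    simp only [Qpoly]; ring
  | m + 2 =>
    show v * Qpoly θ τ q (m+2) v c S T
      = ((v - (θ * qInt q (m+2) + c * q^(m+2))) * Qpoly θ τ q (m+2) v c S T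
          - (T - S * q^(m+1) + τ * qInt q (m+1)) * qInt q (m+2) * Qpoly θ τ q (m+1) v c S T)
        + (θ * qInt q (m+2) + c * q ^ (m+2)) * Qpoly θ τ q (m+2) v c S T
        + (T - S * q ^ (m+1) + τ * qInt q (m+1)) * qInt q (m+2) * Qpoly θ τ q (m+1) v c S T
    ring

lemma hbeta (θ q x : ℝ) (n k : ℕ) (hk : k ≤ n + 1) :
    θ * qInt q k + q ^ k * (θ * qInt q (n + 1 - k) + x * q ^ (n + 1 - k))
      = θ * qInt q (n + 1) + x * q ^ (n + 1) := by
  have hp : q ^ k * q ^ (n + 1 - k) = q ^ (n + 1) := by rw [← pow_add]; congr 1; omega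
  have hq' : qInt q (n + 1) = qInt q k + q ^ k * qInt q (n + 1 - k) := by
    rw [← qInt_add]; congr 1; omega
  linear_combination x * hp - θ * hq'

lemma hgam (τ q s t u : ℝ) (n k : ℕ) :
    q ^ k * gq q (n + 1) k * ((t - s * q ^ (n - k) + τ * qInt q (n - k)) * qInt q (n + 1 - k))
      + gq q (n + 1) (k + 1) * ((u - t * q ^ k + τ * qInt q k) * qInt q (k + 1))
    = (u - s * q ^ n + τ * qInt q n) * qInt q (n + 1) * gq q n k := by
  by_cases hk : k ≤ n
  · have hp : q ^ k * q ^ (n - k) = q ^ n := by rw [← pow_add]; congr 1; omega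
    have hq' : qInt q n = qInt q k + q ^ k * qInt q (n - k) := by
      rw [← qInt_add]; congr 1; omega
    have I1 := (gq_ids q n).1 k
    have I2 := (gq_ids q n).2 k
    linear_combination (q ^ k * (t - s * q ^ (n - k) + τ * qInt q (n - k))) * I1
      + (u - t * q ^ k + τ * qInt q k) * I2
      - s * qInt q (n + 1) * gq q n k * hp - τ * qInt q (n + 1) * gq q n k * hq'
  · have h0 : n + 1 - k = 0 := by omega
    rw [h0, qInt_zero, gq_zero q (n + 1) (k + 1) (by omega), gq_zero q n k (by omega)]
    ring

/-- telescoping auxiliary functions for the convolution identity -/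
def vfun (θ τ q x s t u y z : ℝ) (n : ℕ) : ℕ → ℝ
  | 0 => 0
  | j + 1 => gq q (n + 1) j * Qpoly θ τ q (j + 1) z y t u * Qpoly θ τ q (n + 1 - j) y x s t

def wfun (θ τ q x s t u y z : ℝ) (n : ℕ) (k : ℕ) : ℝ :=
  gq q (n + 1) (k + 1) * ((u - t * q ^ k + τ * qInt q k) * qInt q (k + 1))
    * Qpoly θ τ q k z y t u * Qpoly θ τ q (n - k) y x s t

def wfun' (θ τ q x s t u y z : ℝ) (n : ℕ) : ℕ → ℝ
  | 0 => 0
  | j + 1 => wfun θ τ q x s t u y z n j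

lemma conv (θ τ q x s t u : ℝ) : ∀ n : ℕ, ∀ y z : ℝ,
    Qpoly θ τ q n z x s u
      = ∑ k ∈ Finset.range (n + 1),
          gq q n k * Qpoly θ τ q k z y t u * Qpoly θ τ q (n - k) y x s t := by
  intro n
  induction n using Nat.strong_induction_on with
  | _ n ih =>
  match n with
  | 0 => intro y z; simp [Qpoly, gq_k0]
  | 1 =>
    intro y z
    rw [Finset.sum_range_succ, Finset.sum_range_succ, Finset.sum_range_zero]
    have h11 : gq q 1 1 = 1 := by
      show gq q 0 0 + q ^ 1 * gq q 0 1 = 1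
      show (1 : ℝ) + q ^ 1 * 0 = 1
      ring
    show z - x = 0 + gq q 1 0 * 1 * (y - x) + gq q 1 1 * (z - y) * 1
    rw [h11, gq_k0]; ring
  | n + 2 =>
    intro y z
    have IH1 := ih (n + 1) (by omega) y z
    have IH0 := ih n (by omega) y z
    have hdef : Qpoly θ τ q (n + 2) z x s u
        = (z - (θ * qInt q (n + 1) + x * q ^ (n + 1))) * Qpoly θ τ q (n + 1) z x s u
          - (u - s * q ^ n + τ * qInt q n) * qInt q (n + 1) * Qpoly θ τ q n z x s u := rfl
    have key : ∀ k ∈ Finset.range (n + 2 + 1),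
        gq q (n + 2) k * Qpoly θ τ q k z y t u * Qpoly θ τ q (n + 2 - k) y x s t
          = (z * (gq q (n + 1) k * Qpoly θ τ q k z y t u * Qpoly θ τ q (n + 1 - k) y x s t)
              - (θ * qInt q (n + 1) + x * q ^ (n + 1))
                  * (gq q (n + 1) k * Qpoly θ τ q k z y t u * Qpoly θ τ q (n + 1 - k) y x s t)
              - (u - s * q ^ n + τ * qInt q n) * qInt q (n + 1)
                  * (gq q n k * Qpoly θ τ q k z y t u * Qpoly θ τ q (n - k) y x s t))
            + (vfun θ τ q x s t u y z n k - vfun θ τ q x s t u y z n (k + 1))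
            + (wfun θ τ q x s t u y z n k - wfun' θ τ q x s t u y z n k) := by
      intro k hk
      have hk2 : k ≤ n + 2 := by
        have := Finset.mem_range.mp hk; omega
      rcases Nat.lt_or_ge k (n + 2) with hlt | hge
      · have hkn : k ≤ n + 1 := by omega
        match k with
        | 0 =>
          have hzZ := Qrec θ τ q 0 z y t u
          have hyY := Qrec θ τ q (n + 1) y x s t
          rw [show n + 1 + 1 = n + 2 from rfl, show n + 1 - 1 = n from by omega] at hyY
          have hB := hbeta θ q x n 0 (by omega)
          have hG := hgam τ q s t u n 0
          have hv0 : vfun θ τ q x s t u y z n 0 = 0 := rfl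
          have hv1 : vfun θ τ q x s t u y z n 1
              = gq q (n + 1) 0 * Qpoly θ τ q 1 z y t u * Qpoly θ τ q (n + 1 - 0) y x s t := rfl
          have hw0' : wfun' θ τ q x s t u y z n 0 = 0 := rfl
          rw [hv0, hv1, hw0', wfun]
          simp only [Nat.sub_zero, Nat.zero_sub, pow_zero, Nat.zero_add, qInt_zero, qInt_one,
            gq_k0] at hzZ hyY hB hG ⊢
          linear_combination (-(Qpoly θ τ q (n + 1) y x s t)) * hzZ
            - (Qpoly θ τ q 0 z y t u) * hyY
            - (Qpoly θ τ q 0 z y t u * Qpoly θ τ q (n + 1) y x s t) * hB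
            - (Qpoly θ τ q 0 z y t u * Qpoly θ τ q n y x s t) * hG
        | j + 1 =>
          have hzZ := Qrec θ τ q (j + 1) z y t u
          have hyY := Qrec θ τ q (n - j) y x s t
          rw [show n - j + 1 = n + 1 - j from by omega,
              show n - j - 1 = n - (j + 1) from by omega] at hyY
          have hB := hbeta θ q x n (j + 1) hkn
          have hG := hgam τ q s t u n (j + 1)
          rw [show n + 1 - (j + 1) = n - j from by omega] at hB hG
          rw [show j + 1 + 1 = j + 2 from rfl] at hzZ hG
          simp only [Nat.add_sub_cancel] at hzZ
          have hgp : gq q (n + 2) (j + 1)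
              = gq q (n + 1) j + q ^ (j + 1) * gq q (n + 1) (j + 1) := rfl
          have hvk : vfun θ τ q x s t u y z n (j + 1)
              = gq q (n + 1) j * Qpoly θ τ q (j + 1) z y t u
                  * Qpoly θ τ q (n + 1 - j) y x s t := rfl
          have hvk1 : vfun θ τ q x s t u y z n (j + 2)
              = gq q (n + 1) (j + 1) * Qpoly θ τ q (j + 2) z y t u
                  * Qpoly θ τ q (n + 1 - (j + 1)) y x s t := rfl
          rw [show n + 1 - (j + 1) = n - j from by omega] at hvk1
          have hwk : wfun θ τ q x s t u y z n (j + 1)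
              = gq q (n + 1) (j + 2) * ((u - t * q ^ (j + 1) + τ * qInt q (j + 1))
                  * qInt q (j + 2)) * Qpoly θ τ q (j + 1) z y t u
                  * Qpoly θ τ q (n - (j + 1)) y x s t := rfl
          have hwk' : wfun' θ τ q x s t u y z n (j + 1)
              = gq q (n + 1) (j + 1) * ((u - t * q ^ j + τ * qInt q j)
                  * qInt q (j + 1)) * Qpoly θ τ q j z y t u
                  * Qpoly θ τ q (n - j) y x s t := rfl
          rw [hgp, hvk, hvk1, hwk, hwk',
              show n + 2 - (j + 1) = n + 1 - j from by omega,
              show n + 1 - (j + 1) = n - j from by omega]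
          linear_combination (-(gq q (n + 1) (j + 1) * Qpoly θ τ q (n - j) y x s t)) * hzZ
            - (q ^ (j + 1) * gq q (n + 1) (j + 1) * Qpoly θ τ q (j + 1) z y t u) * hyY
            - (gq q (n + 1) (j + 1) * Qpoly θ τ q (j + 1) z y t u
                * Qpoly θ τ q (n - j) y x s t) * hB
            - (Qpoly θ τ q (j + 1) z y t u * Qpoly θ τ q (n - (j + 1)) y x s t) * hG
      · have hke : k = n + 2 := by omega
        subst hke
        have hT1 : gq q (n + 1) (n + 2) = 0 := gq_zero _ _ _ (by omega)
        have hT0 : gq q n (n + 2) = 0 := gq_zero _ _ _ (by omega)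
        have hT3 : gq q (n + 1) (n + 3) = 0 := gq_zero _ _ _ (by omega)
        have hgp : gq q (n + 2) (n + 2)
            = gq q (n + 1) (n + 1) + q ^ (n + 2) * gq q (n + 1) (n + 2) := rfl
        have hvk : vfun θ τ q x s t u y z n (n + 2)
            = gq q (n + 1) (n + 1) * Qpoly θ τ q (n + 2) z y t u
                * Qpoly θ τ q (n + 1 - (n + 1)) y x s t := rfl
        have hvk1 : vfun θ τ q x s t u y z n (n + 3)
            = gq q (n + 1) (n + 2) * Qpoly θ τ q (n + 3) z y t u
                * Qpoly θ τ q (n + 1 - (n + 2)) y x s t := rfl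
        have hwk : wfun θ τ q x s t u y z n (n + 2)
            = gq q (n + 1) (n + 3) * ((u - t * q ^ (n + 2) + τ * qInt q (n + 2))
                * qInt q (n + 3)) * Qpoly θ τ q (n + 2) z y t u
                * Qpoly θ τ q (n - (n + 2)) y x s t := rfl
        have hwk' : wfun' θ τ q x s t u y z n (n + 2)
            = gq q (n + 1) (n + 2) * ((u - t * q ^ (n + 1) + τ * qInt q (n + 1))
                * qInt q (n + 2)) * Qpoly θ τ q (n + 1) z y t u
                * Qpoly θ τ q (n - (n + 1)) y x s t := rfl
        rw [hgp, hvk, hvk1, hwk, hwk', hT1, hT0, hT3,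
            show n + 2 - (n + 2) = 0 from by omega, show n + 1 - (n + 1) = 0 from by omega]
        ring
    rw [hdef, IH1, IH0, Finset.sum_congr rfl key]
    rw [Finset.sum_add_distrib, Finset.sum_add_distrib, Finset.sum_sub_distrib,
        Finset.sum_sub_distrib, ← Finset.mul_sum, ← Finset.mul_sum, ← Finset.mul_sum]
    have htel1 : ∑ k ∈ Finset.range (n + 2 + 1),
        (vfun θ τ q x s t u y z n k - vfun θ τ q x s t u y z n (k + 1)) = 0 := by
      rw [Finset.sum_range_sub' (vfun θ τ q x s t u y z n) (n + 2 + 1)]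
      have h3 : vfun θ τ q x s t u y z n (n + 2 + 1)
          = gq q (n + 1) (n + 2) * Qpoly θ τ q (n + 3) z y t u
              * Qpoly θ τ q (n + 1 - (n + 2)) y x s t := rfl
      have h0 : vfun θ τ q x s t u y z n 0 = 0 := rfl
      rw [h3, h0, gq_zero q (n + 1) (n + 2) (by omega)]; ring
    have htel2 : ∑ k ∈ Finset.range (n + 2 + 1),
        (wfun θ τ q x s t u y z n k - wfun' θ τ q x s t u y z n k) = 0 := by
      rw [Finset.sum_sub_distrib]
      have h1 : ∑ k ∈ Finset.range (n + 2 + 1), wfun' θ τ q x s t u y z n k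
          = ∑ k ∈ Finset.range (n + 2), wfun θ τ q x s t u y z n k := by
        rw [Finset.sum_range_succ' (wfun' θ τ q x s t u y z n) (n + 2)]
        simp only [wfun']
        ring
      rw [h1, Finset.sum_range_succ (wfun θ τ q x s t u y z n) (n + 2)]
      have h2 : wfun θ τ q x s t u y z n (n + 2) = 0 := by
        rw [wfun, gq_zero q (n + 1) (n + 3) (by omega)]; ring
      rw [h2]; ring
    rw [htel1, htel2]
    have hT1t : ∑ k ∈ Finset.range (n + 2 + 1),
        gq q (n + 1) k * Qpoly θ τ q k z y t u * Qpoly θ τ q (n + 1 - k) y x s t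
        = ∑ k ∈ Finset.range (n + 1 + 1),
            gq q (n + 1) k * Qpoly θ τ q k z y t u * Qpoly θ τ q (n + 1 - k) y x s t := by
      rw [Finset.sum_range_succ]
      rw [gq_zero q (n + 1) (n + 2) (by omega)]; ring
    have hT0t : ∑ k ∈ Finset.range (n + 2 + 1),
        gq q n k * Qpoly θ τ q k z y t u * Qpoly θ τ q (n - k) y x s t
        = ∑ k ∈ Finset.range (n + 1),
            gq q n k * Qpoly θ τ q k z y t u * Qpoly θ τ q (n - k) y x s t := by
      rw [Finset.sum_range_succ, Finset.sum_range_succ,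
          gq_zero q n (n + 2) (by omega), gq_zero q n (n + 1) (by omega)]; ring
    rw [hT1t, hT0t]
    ring

open MeasureTheory ProbabilityTheory

lemma Qcont (θ τ q x s t : ℝ) : ∀ n, Continuous fun v => Qpoly θ τ q n v x s t := by
  intro n
  induction n using Nat.strong_induction_on with
  | _ n ih =>
  match n with
  | 0 => exact continuous_const
  | 1 => exact continuous_id.sub continuous_const
  | n + 2 =>
    show Continuous fun v =>
      (v - (θ * qInt q (n + 1) + x * q ^ (n + 1))) * Qpoly θ τ q (n + 1) v x s t
        - (t - s * q ^ n + τ * qInt q n) * qInt q (n + 1) * Qpoly θ τ q n v x s t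
    exact ((continuous_id.sub continuous_const).mul (ih (n + 1) (by omega))).sub
      (continuous_const.mul (ih n (by omega)))

lemma Qbound (θ τ q x s t : ℝ) : ∀ n, ∃ C : ℝ, 0 ≤ C ∧
    ∀ v : ℝ, |Qpoly θ τ q n v x s t| ≤ C * (1 + |v|) ^ n := by
  intro n
  induction n using Nat.strong_induction_on with
  | _ n ih =>
  match n with
  | 0 => exact ⟨1, zero_le_one, fun v => by simp [Qpoly]⟩
  | 1 =>
    refine ⟨1 + |x|, by positivity, fun v => ?_⟩
    have h1 : |Qpoly θ τ q 1 v x s t| = |v - x| := rfl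
    have h2 : |v - x| ≤ |v| + |x| := abs_sub _ _
    have h3 : 0 ≤ |v| := abs_nonneg v
    have h4 : 0 ≤ |x| := abs_nonneg x
    rw [h1, pow_one]
    nlinarith
  | n + 2 =>
    obtain ⟨C1, hC1, hB1⟩ := ih (n + 1) (by omega)
    obtain ⟨C0, hC0, hB0⟩ := ih n (by omega)
    set a := θ * qInt q (n + 1) + x * q ^ (n + 1) with ha
    set b := (t - s * q ^ n + τ * qInt q n) * qInt q (n + 1) with hb
    refine ⟨(1 + |a|) * C1 + |b| * C0, by positivity, fun v => ?_⟩
    have he : Qpoly θ τ q (n + 2) v x s t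
        = (v - a) * Qpoly θ τ q (n + 1) v x s t - b * Qpoly θ τ q n v x s t := rfl
    have h1 : |Qpoly θ τ q (n + 2) v x s t|
        ≤ |v - a| * |Qpoly θ τ q (n + 1) v x s t| + |b| * |Qpoly θ τ q n v x s t| := by
      rw [he]
      calc |(v - a) * Qpoly θ τ q (n + 1) v x s t - b * Qpoly θ τ q n v x s t|
          ≤ |(v - a) * Qpoly θ τ q (n + 1) v x s t| + |b * Qpoly θ τ q n v x s t| :=
            abs_sub _ _
        _ = |v - a| * |Qpoly θ τ q (n + 1) v x s t| + |b| * |Qpoly θ τ q n v x s t| := by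
            rw [abs_mul, abs_mul]
    have hva : |v - a| ≤ (1 + |a|) * (1 + |v|) := by
      have := abs_sub v a
      have h3 : 0 ≤ |v| := abs_nonneg v
      have h4 : 0 ≤ |a| := abs_nonneg a
      nlinarith
    have hv1 : (1 : ℝ) ≤ 1 + |v| := by have := abs_nonneg v; linarith
    have hp1 : (1 + |v|) ^ n ≤ (1 + |v|) ^ (n + 2) := pow_le_pow_right₀ hv1 (by omega)
    have hp2 : (1 + |v|) ^ (n + 1) * (1 + |v|) = (1 + |v|) ^ (n + 2) := (pow_succ _ _).symm
    have hQ1 := hB1 v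
    have hQ0 := hB0 v
    have hq1 : 0 ≤ |Qpoly θ τ q (n + 1) v x s t| := abs_nonneg _
    have hq0 : 0 ≤ |Qpoly θ τ q n v x s t| := abs_nonneg _
    have hb0 : 0 ≤ |b| := abs_nonneg b
    have ha0 : 0 ≤ |a| := abs_nonneg a
    have hvap : 0 ≤ |v - a| := abs_nonneg _
    have hpn1 : 0 ≤ (1 + |v|) ^ (n + 1) := by positivity
    have hpn : 0 ≤ (1 + |v|) ^ n := by positivity
    calc |Qpoly θ τ q (n + 2) v x s t|
        ≤ |v - a| * |Qpoly θ τ q (n + 1) v x s t| + |b| * |Qpoly θ τ q n v x s t| := h1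
      _ ≤ ((1 + |a|) * (1 + |v|)) * (C1 * (1 + |v|) ^ (n + 1)) + |b| * (C0 * (1 + |v|) ^ n) := by
          have t1 : |v - a| * |Qpoly θ τ q (n + 1) v x s t|
              ≤ ((1 + |a|) * (1 + |v|)) * (C1 * (1 + |v|) ^ (n + 1)) := by
            apply mul_le_mul hva hQ1 hq1 (by positivity)
          have t2 : |b| * |Qpoly θ τ q n v x s t| ≤ |b| * (C0 * (1 + |v|) ^ n) :=
            mul_le_mul_of_nonneg_left hQ0 hb0
          linarith
      _ ≤ ((1 + |a|) * C1 + |b| * C0) * (1 + |v|) ^ (n + 2) := by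
          have k1 : (1 + |a|) * (1 + |v|) * (C1 * (1 + |v|) ^ (n + 1))
              = (1 + |a|) * C1 * (1 + |v|) ^ (n + 2) := by rw [← hp2]; ring
          have k2 : |b| * C0 * (1 + |v|) ^ n ≤ |b| * C0 * (1 + |v|) ^ (n + 2) :=
            mul_le_mul_of_nonneg_left hp1 (mul_nonneg hb0 hC0)
          nlinarith [k1, k2]

lemma integrable_abs_pow_of_lintegral {ρ : Measure ℝ} (b : ℕ)
    (h : ∫⁻ z, ENNReal.ofReal (|z| ^ b) ∂ρ < ⊤) :
    Integrable (fun z => |z| ^ b) ρ := by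
  refine ⟨(continuous_abs.pow b).aestronglyMeasurable, ?_⟩
  rw [hasFiniteIntegral_iff_ofReal (Filter.Eventually.of_forall fun z => by positivity)]
  exact h

lemma integrable_of_polybound {ρ : Measure ℝ}
    (hm : ∀ b : ℕ, Integrable (fun z => |z| ^ b) ρ)
    {f : ℝ → ℝ} (hf : AEStronglyMeasurable f ρ) (C : ℝ) (n : ℕ)
    (hb : ∀ z', |f z'| ≤ C * (1 + |z'|) ^ n) : Integrable f ρ := by
  have hgeq : ∀ z' : ℝ, C * (1 + |z'|) ^ n
      = ∑ j ∈ Finset.range (n + 1), C * ((n.choose j : ℝ) * |z'| ^ j) := by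
    intro z'
    rw [← Finset.mul_sum]
    congr 1
    rw [add_comm (1 : ℝ) |z'|, add_pow]
    refine Finset.sum_congr rfl fun j hj => ?_
    ring
  have hg : Integrable (fun z' => C * (1 + |z'|) ^ n) ρ := by
    rw [show (fun z' => C * (1 + |z'|) ^ n)
        = fun z' => ∑ j ∈ Finset.range (n + 1), C * ((n.choose j : ℝ) * |z'| ^ j)
      from funext hgeq]
    exact integrable_finset_sum _ fun j _ => ((hm j).const_mul _).const_mul _
  exact hg.mono' hf (Filter.Eventually.of_forall fun z' => by
    rw [Real.norm_eq_abs]; exact hb z')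


open MeasureTheory ProbabilityTheory

theorem stmt12 (θ τ q : ℝ) (hq1 : -1 ≤ q) (hq2 : q ≤ 1) (hτ : 0 ≤ τ)
    (s t u x : ℝ) (hs : 0 ≤ s) (hst : s < t) (htu : t < u)
    (μ : Measure ℝ) [IsProbabilityMeasure μ]
    (hμmom : ∀ a : ℕ, Integrable (fun y => |y| ^ a) μ)
    (hμorth : ∀ n : ℕ, 1 ≤ n → ∫ y, Qpoly θ τ q n y x s t ∂μ = 0)
    (κ : Kernel ℝ ℝ) [IsMarkovKernel κ]
    (hκorth : ∀ y : ℝ, ∀ k : ℕ, 1 ≤ k → ∫ z, Qpoly θ τ q k z y t u ∂(κ y) = 0)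
    (hmom : ∀ a b : ℕ,
      (∫⁻ y, ∫⁻ z, ENNReal.ofReal (|y| ^ a * |z| ^ b) ∂(κ y) ∂μ) < ⊤) :
    ∀ n : ℕ, 1 ≤ n → ∫ z, Qpoly θ τ q n z x s u ∂(μ.bind κ) = 0 := by
  intro n hn
  -- moment hypotheses, simplified
  have hmom0 : ∀ b : ℕ, (∫⁻ y, ∫⁻ z, ENNReal.ofReal (|z| ^ b) ∂(κ y) ∂μ) < ⊤ := by
    intro b
    have := hmom 0 b
    simpa using this
  have hmeasb : ∀ b : ℕ, Measurable fun z : ℝ => ENNReal.ofReal (|z| ^ b) := fun b =>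
    ((measurable_id.abs).pow_const b).ennreal_ofReal
  -- moments of the bind measure
  have hmb : ∀ b : ℕ, Integrable (fun z => |z| ^ b) (μ.bind ⇑κ) := by
    intro b
    apply integrable_abs_pow_of_lintegral
    rw [Measure.lintegral_bind κ.measurable.aemeasurable (hmeasb b).aemeasurable]
    exact hmom0 b
  -- a.e. y, all moments of κ y are finite
  have hae : ∀ᵐ y ∂μ, ∀ b : ℕ, Integrable (fun z => |z| ^ b) (κ y) := by
    rw [ae_all_iff]
    intro b
    have hml : Measurable fun y => ∫⁻ z, ENNReal.ofReal (|z| ^ b) ∂(κ y) :=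
      (Measure.measurable_lintegral (hmeasb b)).comp κ.measurable
    filter_upwards [ae_lt_top hml (hmom0 b).ne] with y hy
    exact integrable_abs_pow_of_lintegral b hy
  -- inner integral computation
  have hinner : ∀ᵐ y ∂μ, ∫ z, Qpoly θ τ q n z x s u ∂(κ y) = Qpoly θ τ q n y x s t := by
    filter_upwards [hae] with y hy
    have hQint : ∀ k : ℕ, Integrable (fun z => Qpoly θ τ q k z y t u) (κ y) := by
      intro k
      obtain ⟨C, _, hC⟩ := Qbound θ τ q y t u k
      exact integrable_of_polybound hy (Qcont θ τ q y t u k).aestronglyMeasurable C k hC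
    have hconv : (fun z => Qpoly θ τ q n z x s u)
        = fun z => ∑ k ∈ Finset.range (n + 1),
            gq q n k * Qpoly θ τ q k z y t u * Qpoly θ τ q (n - k) y x s t :=
      funext fun z => conv θ τ q x s t u n y z
    rw [hconv, integral_finset_sum _ (fun k _ => (((hQint k).const_mul _).mul_const _))]
    have hterm : ∀ k ∈ Finset.range (n + 1), k ≠ 0 →
        (∫ z, gq q n k * Qpoly θ τ q k z y t u * Qpoly θ τ q (n - k) y x s t ∂(κ y)) = 0 := by
      intro k _ hk0
      rw [integral_mul_const, integral_const_mul, hκorth y k (by omega)]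
      ring
    rw [Finset.sum_eq_single_of_mem 0 (Finset.mem_range.mpr (by omega)) hterm]
    have h0 : (fun z => gq q n 0 * Qpoly θ τ q 0 z y t u * Qpoly θ τ q (n - 0) y x s t)
        = fun _ : ℝ => gq q n 0 * 1 * Qpoly θ τ q (n - 0) y x s t := rfl
    rw [h0, integral_const, probReal_univ, gq_k0, Nat.sub_zero]
    simp
  -- integrability of the integrand w.r.t. the bind measure
  have hfarg : Integrable (fun z => Qpoly θ τ q n z x s u) (μ.bind ⇑κ) := by
    obtain ⟨C, _, hC⟩ := Qbound θ τ q x s u n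
    exact integrable_of_polybound hmb (Qcont θ τ q x s u n).aestronglyMeasurable C n hC
  -- bind = snd of compProd
  have hsnd : μ.bind ⇑κ = (μ ⊗ₘ κ).map Prod.snd := by
    ext sset hs'
    rw [Measure.bind_apply hs' κ.measurable.aemeasurable, Measure.map_apply measurable_snd hs',
      Measure.compProd_apply (measurable_snd hs')]
    rfl
  -- swap the integral
  have hASM : AEStronglyMeasurable (fun z => Qpoly θ τ q n z x s u) ((μ ⊗ₘ κ).map Prod.snd) :=
    (Qcont θ τ q x s u n).aestronglyMeasurable
  have hswap : ∫ z, Qpoly θ τ q n z x s u ∂(μ.bind ⇑κ)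
      = ∫ y, (∫ z, Qpoly θ τ q n z x s u ∂(κ y)) ∂μ := by
    rw [hsnd, integral_map measurable_snd.aemeasurable hASM]
    have hint2 : Integrable (fun p : ℝ × ℝ => Qpoly θ τ q n p.2 x s u) (μ ⊗ₘ κ) := by
      rw [hsnd] at hfarg
      exact (integrable_map_measure hASM measurable_snd.aemeasurable).mp hfarg
    exact Measure.integral_compProd hint2
  rw [hswap, integral_congr_ae hinner]
  exact hμorth n hn
end
end
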